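/- arXiv:2203.11341 — 8 statements merged into one kernel-verified Lean document; each statement's English description precedes it below -/
import Mathlib

section
/- If a word w has periodic roots u and v (i.e., w is a prefix of u·w and of v·w) and |u| + |v| ≤ |w|, then u and v commute. -/
/-- Periodicity lemma (Fine and Wilf, weak form). -/
theorem per_lemma_comm {α : Type*} (u v w : List α)
    (hu : w <+: u ++ w) (hv : w <+: v ++ w)
    (hlen : u.length + v.length ≤ w.length) :
    u ++ v = v ++ u := by
  obtain ⟨s, hs⟩ := hu
  obtain ⟨t, ht⟩ := hv
  have hvw : w.take v.length = v := by
    have := congrArg (List.take v.length) ht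
    rwa [List.take_append_of_le_length (le_trans (Nat.le_add_left _ _) hlen),
      List.take_left' rfl] at this
  have huw : w.take u.length = u := by
    have := congrArg (List.take u.length) hs
    rwa [List.take_append_of_le_length (le_trans (Nat.le_add_right _ _) hlen),
      List.take_left' rfl] at this
  have h1 : w.take (u.length + v.length) = u ++ v := by
    have := congrArg (List.take (u.length + v.length)) hs
    rw [List.take_append_of_le_length hlen, List.take_length_add_append, hvw] at this
    exact this
  have h2 : w.take (v.length + u.length) = v ++ u := by
    have := congrArg (List.take (v.length + u.length)) ht
    rw [List.take_append_of_le_length (by omega), List.take_length_add_append, huw] at this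
    exact this
  rw [← h1, ← h2, Nat.add_comm]
end

section
/- If both u·v and u·v·v are imprimitive, then u and v commute. -/
/-- `wpow u n` is the `n`-fold concatenation of the word `u` with itself. -/
def wpow {α : Type*} (u : List α) (n : ℕ) : List α := (List.replicate n u).flatten

/-- A word is imprimitive if it is empty or a proper power. -/
def Imprim {α : Type*} (w : List α) : Prop := ∃ (t : List α) (k : ℕ), 2 ≤ k ∧ w = wpow t k

namespace WpowAux

variable {α : Type*}

theorem wpow_zero (u : List α) : wpow u 0 = [] := rfl

theorem wpow_succ (u : List α) (n : ℕ) : wpow u (n + 1) = u ++ wpow u n := by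
  simp [wpow, List.replicate_succ]

theorem wpow_add (u : List α) (a b : ℕ) : wpow u (a + b) = wpow u a ++ wpow u b := by
  induction a with
  | zero => simp [wpow_zero]
  | succ a ih =>
      have : a + 1 + b = (a + b) + 1 := by omega
      rw [this, wpow_succ, wpow_succ, ih, List.append_assoc]

theorem length_wpow (u : List α) (n : ℕ) : (wpow u n).length = n * u.length := by
  induction n with
  | zero => simp [wpow_zero]
  | succ n ih => rw [wpow_succ]; simp [ih]; ring

theorem take_wpow (u : List α) (a b : ℕ) :
    (wpow u (a + b)).take (a * u.length) = wpow u a := by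
  induction a with
  | zero => simp [wpow_zero]
  | succ a ih =>
      have h : a + 1 + b = a + b + 1 := by omega
      rw [h, wpow_succ, wpow_succ]
      have : (a + 1) * u.length = u.length + a * u.length := by ring
      rw [this, List.take_append]
      simp [ih]

theorem drop_wpow (u : List α) (a b : ℕ) :
    (wpow u (a + b)).drop (a * u.length) = wpow u b := by
  induction a with
  | zero => simp [wpow_zero]
  | succ a ih =>
      have h : a + 1 + b = a + b + 1 := by omega
      rw [h, wpow_succ]
      have : (a + 1) * u.length = u.length + a * u.length := by ring
      rw [this, List.drop_append]
      simp [ih]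

/-- `z` has period `p`: positions `p` apart agree. -/
def HasPeriod (z : List α) (p : ℕ) : Prop := ∀ i, i + p < z.length → z[i + p]? = z[i]?

theorem hasPeriod_of_prefix {z w : List α} (p : ℕ) (hw : w <+: z) (hz : HasPeriod z p) :
    HasPeriod w p := by
  intro i hi
  obtain ⟨r, hr⟩ := hw
  have h1 : i + p < z.length := by
    have := hr ▸ (by simp : (w ++ r).length = w.length + r.length); omega
  have h2 := hz i h1
  rw [← hr] at h2
  rw [List.getElem?_append_left hi, List.getElem?_append_left (by omega : i < w.length)] at h2
  exact h2

theorem hasPeriod_of_suffix {z w : List α} (p : ℕ) (hw : w <:+ z) (hz : HasPeriod z p) :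
    HasPeriod w p := by
  intro i hi
  obtain ⟨l, hl⟩ := hw
  have hlen : z.length = l.length + w.length := by rw [← hl]; simp
  have h2 := hz (l.length + i) (by omega)
  rw [← hl] at h2
  rw [show l.length + i + p = l.length + (i + p) by omega] at h2
  rw [List.getElem?_append_right (by omega), List.getElem?_append_right (by omega)] at h2
  simpa using h2

theorem hasPeriod_of_infix {z w : List α} (p : ℕ) (hw : w <:+: z) (hz : HasPeriod z p) :
    HasPeriod w p := by
  obtain ⟨l, r, h⟩ := hw
  have h1 : l ++ w <+: z := ⟨r, h⟩
  exact hasPeriod_of_suffix p ⟨l, rfl⟩ (hasPeriod_of_prefix p h1 hz)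

theorem hasPeriod_of_drop_prefix {z : List α} {p : ℕ} (h : z.drop p <+: z) :
    HasPeriod z p := by
  intro i hi
  obtain ⟨rest, hrest⟩ := h
  have hlen : (z.drop p).length = z.length - p := by simp
  calc z[i + p]? = (z.drop p)[i]? := by rw [List.getElem?_drop, Nat.add_comm]
  _ = (z.drop p ++ rest)[i]? := (List.getElem?_append_left (by omega)).symm
  _ = z[i]? := by rw [hrest]

theorem hasPeriod_wpow (u : List α) (n : ℕ) : HasPeriod (wpow u n) u.length := by
  rcases n with _ | n
  · intro i hi; simp [wpow_zero] at hi
  · apply hasPeriod_of_drop_prefix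
    have h1 : (wpow u (n + 1)).drop u.length = wpow u n := by
      conv_lhs => rw [show n + 1 = 1 + n by omega]
      have := drop_wpow u 1 n
      simpa using this
    rw [h1]
    exact ⟨u, by rw [wpow_add u n 1]; simp [wpow_succ, wpow_zero]⟩

theorem hasPeriod_sub {z : List α} {p q : ℕ} (hp : HasPeriod z p) (hq : HasPeriod z q)
    (hle : p ≤ q) (hlen : p + q ≤ z.length) : HasPeriod z (q - p) := by
  intro i hi
  rcases Nat.lt_or_ge (i + q) z.length with h | h
  · have e1 := hp (i + q - p) (by omega)
    rw [show i + q - p + p = i + q by omega] at e1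
    have e2 := hq i h
    rw [show i + (q - p) = i + q - p by omega]
    exact e1.symm.trans e2
  · have hip : p ≤ i := by omega
    have e1 := hp (i - p) (by omega)
    rw [show i - p + p = i by omega] at e1
    have e2 := hq (i - p) (by omega)
    rw [show i - p + q = i + (q - p) by omega] at e2
    rw [e2, ← e1]

theorem fine_wilf (p q : ℕ) {z : List α} (hp : HasPeriod z p) (hq : HasPeriod z q)
    (hlen : p + q ≤ z.length) : HasPeriod z (Nat.gcd p q) := by
  rcases Nat.eq_zero_or_pos p with h0 | hppos
  · subst h0; simpa using hq
  rcases Nat.eq_zero_or_pos q with h0 | hqpos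
  · subst h0; simpa using hp
  rcases Nat.le_total p q with hle | hle
  · have h' := hasPeriod_sub hp hq hle hlen
    have := fine_wilf p (q - p) hp h' (by omega)
    rwa [Nat.gcd_sub_self_right hle] at this
  · have h' := hasPeriod_sub hq hp hle (by omega)
    have := fine_wilf q (p - q) hq h' (by omega)
    rw [Nat.gcd_sub_self_right hle] at this
    rwa [Nat.gcd_comm] at this
termination_by p + q

theorem eq_wpow_of_hasPeriod {z : List α} {g n : ℕ} (_hg : 0 < g) (hz : HasPeriod z g)
    (hlen : z.length = n * g) : z = wpow (z.take g) n := by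
  induction n generalizing z with
  | zero =>
      simp only [Nat.zero_mul, List.length_eq_zero_iff] at hlen
      simp [wpow_zero, hlen]
  | succ n ih =>
      have hng : (n + 1) * g = n * g + g := by ring
      have hlg : g ≤ z.length := by omega
      have hdz : (z.drop g).length = n * g := by simp; omega
      have hdp : HasPeriod (z.drop g) g :=
        hasPeriod_of_suffix g (List.drop_suffix g z) hz
      have hrec := ih hdp hdz
      rcases Nat.eq_zero_or_pos n with hn0 | hnpos
      · subst hn0
        have h0 : z.drop g = [] := List.length_eq_zero_iff.mp (by simpa using hdz)
        calc z = z.take g ++ z.drop g := (List.take_append_drop g z).symm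
        _ = wpow (z.take g) (0 + 1) := by simp [h0, wpow_succ, wpow_zero]
      · have hkey : (z.drop g).take g = z.take g := by
          apply List.ext_getElem?
          intro i
          rcases Nat.lt_or_ge i g with hig | hig
          · rw [List.getElem?_take, List.getElem?_take, if_pos hig, if_pos hig,
              List.getElem?_drop]
            have hng' : i + g < z.length := by nlinarith
            have := hz i hng'
            rw [Nat.add_comm g i]
            exact this
          · rw [List.getElem?_take, List.getElem?_take, if_neg (by omega), if_neg (by omega)]
        calc z = z.take g ++ z.drop g := (List.take_append_drop g z).symm
        _ = z.take g ++ wpow (z.take g) n := by rw [hrec, hkey]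
        _ = wpow (z.take g) (n + 1) := (wpow_succ _ n).symm

end WpowAux

open WpowAux in
/-- If both `u·v` and `u·v·v` are imprimitive, then `u` and `v` commute. -/
theorem imprim_ext_suf_comm {α : Type*} (u v : List α)
    (h1 : Imprim (u ++ v)) (h2 : Imprim (u ++ v ++ v)) :
    u ++ v = v ++ u := by
  obtain ⟨t, k, hk, ht⟩ := h1
  obtain ⟨s, m, hm, hs⟩ := h2
  rcases Nat.eq_zero_or_pos t.length with ht0 | htpos
  · have hL : (u ++ v).length = 0 := by rw [ht, length_wpow, ht0, Nat.mul_zero]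
    simp only [List.length_append] at hL
    have hu : u = [] := List.length_eq_zero_iff.mp (by omega)
    have hv : v = [] := List.length_eq_zero_iff.mp (by omega)
    rw [hu, hv]
  rcases Nat.eq_zero_or_pos s.length with hs0 | hspos
  · have hL : (u ++ v ++ v).length = 0 := by rw [hs, length_wpow, hs0, Nat.mul_zero]
    simp only [List.length_append] at hL
    have hu : u = [] := List.length_eq_zero_iff.mp (by omega)
    have hv : v = [] := List.length_eq_zero_iff.mp (by omega)
    rw [hu, hv]
  set z : List α := v ++ wpow t k with hz
  have hzt : HasPeriod z t.length := by
    apply hasPeriod_of_suffix _ (⟨u, ?_⟩ : z <:+ wpow t (k + k)) (hasPeriod_wpow t (k + k))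
    rw [hz, ← List.append_assoc, ht, wpow_add]
  have hzs : HasPeriod z s.length := by
    apply hasPeriod_of_infix _ (⟨u ++ v, v, ?_⟩ : z <:+: wpow s (m + m)) (hasPeriod_wpow s (m + m))
    rw [hz, ← ht, wpow_add, ← hs]
    simp
  have hlt : (u ++ v).length = k * t.length := by rw [ht, length_wpow]
  have hls : (u ++ v ++ v).length = m * s.length := by rw [hs, length_wpow]
  simp only [List.length_append] at hlt hls
  have hzlen : z.length = v.length + k * t.length := by simp [hz, length_wpow]
  have h2t : 2 * t.length ≤ k * t.length := Nat.mul_le_mul_right _ hk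
  have h2s : 2 * s.length ≤ m * s.length := Nat.mul_le_mul_right _ hm
  have hbig : s.length + t.length ≤ z.length := by
    rcases Nat.le_total s.length t.length with h | h <;> omega
  set g := Nat.gcd s.length t.length with hgdef
  have hgpos : 0 < g := Nat.gcd_pos_of_pos_left _ hspos
  have hper : HasPeriod z g := fine_wilf _ _ hzs hzt hbig
  have hgs : g ∣ s.length := Nat.gcd_dvd_left _ _
  have hgt : g ∣ t.length := Nat.gcd_dvd_right _ _
  have hgz : g ∣ z.length := by
    have : z.length = m * s.length := by omega
    exact this ▸ Dvd.dvd.mul_left hgs m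
  have hgkt : g ∣ k * t.length := Dvd.dvd.mul_left hgt k
  have hgv : g ∣ v.length := by
    have hv : v.length = z.length - k * t.length := by omega
    exact hv ▸ Nat.dvd_sub hgz hgkt
  have hgu : g ∣ u.length := by
    have hu : u.length = k * t.length - v.length := by omega
    exact hu ▸ Nat.dvd_sub hgkt hgv
  obtain ⟨N, hN⟩ := hgz
  set r := z.take g with hr
  have hzr : z = wpow r N := eq_wpow_of_hasPeriod hgpos hper (by rw [hN, Nat.mul_comm])
  have hgle : g ≤ s.length := Nat.le_of_dvd hspos hgs
  have hrlen : r.length = g := by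
    rw [hr, List.length_take, Nat.min_eq_left (by omega)]
  -- u ++ v = wpow t k = z.drop |v|
  obtain ⟨b, hb⟩ := hgv
  obtain ⟨a, ha⟩ := hgu
  have hbN : b ≤ N := by nlinarith [hzlen]
  have huv : u ++ v = wpow r (N - b) := by
    have : wpow t k = z.drop v.length := by rw [hz, List.drop_left]
    rw [ht, this, hzr, show N = b + (N - b) by omega, hb,
      show g * b = b * r.length by rw [hrlen, Nat.mul_comm], drop_wpow]
    congr 1
    omega
  have haNb : a ≤ N - b := by
    have h1 : (u ++ v).length = (N - b) * g := by
      rw [huv, length_wpow, hrlen]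
    simp only [List.length_append] at h1
    nlinarith
  have hu' : u = wpow r a := by
    have : u = (u ++ v).take u.length := by simp
    rw [this, huv, show N - b = a + (N - b - a) by omega, ha,
      show g * a = a * r.length by rw [hrlen, Nat.mul_comm], take_wpow]
  have hv' : v = wpow r (N - b - a) := by
    have : v = (u ++ v).drop u.length := by simp
    rw [this, huv, show N - b = a + (N - b - a) by omega, ha,
      show g * a = a * r.length by rw [hrlen, Nat.mul_comm], drop_wpow]
    congr 1
    omega
  rw [hu', hv', ← wpow_add, ← wpow_add, Nat.add_comm]
end

section
/- Let x and y be non-commuting words. If x·y = z^ℓ with ℓ ≥ 2, then there exist non-commuting words r and q and integers m, n ≥ 0 with m + n + 1 = ℓ such that x = (r·q)^m · r, y = q·(r·q)^n, and z = r·q. -/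
lemma wpow_add {α : Type*} (u : List α) (a b : ℕ) :
    wpow u (a + b) = wpow u a ++ wpow u b := by
  simp only [wpow, List.replicate_add, List.flatten_append]

lemma wpow_succ {α : Type*} (u : List α) (n : ℕ) :
    wpow u (n + 1) = wpow u n ++ u := by
  rw [wpow_add]; simp [wpow]

lemma wpow_length {α : Type*} (u : List α) (n : ℕ) :
    (wpow u n).length = n * u.length := by
  induction n with
  | zero => simp [wpow]
  | succ k ih => rw [wpow_succ]; simp [ih]; ring

lemma wpow_comm {α : Type*} {u v : List α} (h : v ++ u = u ++ v) (n : ℕ) :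
    v ++ wpow u n = wpow u n ++ v := by
  induction n with
  | zero => simp [wpow]
  | succ k ih =>
      rw [wpow_succ, ← List.append_assoc, ih, List.append_assoc, h,
        ← List.append_assoc]

/-- Case B of the parametric solution of `x^j y^k = z^ℓ`: the case `x·y = z^ℓ`, `ℓ ≥ 2`. -/
theorem LS_case_B {α : Type*} (x y z : List α) (l : ℕ)
    (hcomm : x ++ y ≠ y ++ x) (hl : 2 ≤ l) (h : x ++ y = wpow z l) :
    ∃ (r q : List α) (m n : ℕ), r ++ q ≠ q ++ r ∧ m + n + 1 = l ∧
      x = wpow (r ++ q) m ++ r ∧ y = q ++ wpow (r ++ q) n ∧ z = r ++ q := by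
  have hz : z ≠ [] := by
    rintro rfl
    have hxy : x ++ y = ([] : List α) := by simpa [wpow] using h
    rcases List.append_eq_nil_iff.mp hxy with ⟨rfl, rfl⟩
    exact hcomm rfl
  have hL : 0 < z.length := List.length_pos_iff.mpr hz
  set L := z.length with hLdef
  set m := x.length / L with hmdef
  set s := x.length % L with hsdef
  have hlen : x.length + y.length = l * L := by
    have := congrArg List.length h
    simpa [wpow_length] using this
  have hxlt : x.length < l * L := by
    rcases Nat.lt_or_ge x.length (l * L) with h1 | h1
    · exact h1
    · exfalso
      have hy0 : y.length = 0 := by omega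
      have : y = [] := List.length_eq_zero_iff.mp hy0
      subst this
      simp at hcomm
  have hm : m < l := (Nat.div_lt_iff_lt_mul hL).mpr hxlt
  have hs : s < L := Nat.mod_lt _ hL
  set n := l - m - 1 with hndef
  have hmn : m + n + 1 = l := by omega
  set r := z.take s with hrdef
  set q := z.drop s with hqdef
  have hzrq : r ++ q = z := List.take_append_drop s z
  have hkey : wpow z l = (wpow z m ++ r) ++ (q ++ wpow z n) := by
    have : l = m + (1 + n) := by omega
    rw [this, wpow_add, wpow_add]
    have h1 : wpow z 1 = z := by simp [wpow]
    rw [h1, ← hzrq]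
    simp [List.append_assoc]
  have hxy2 : x ++ y = (wpow z m ++ r) ++ (q ++ wpow z n) := h.trans hkey
  have hrlen : r.length = s := by
    simp [hrdef, Nat.le_of_lt hs]; omega
  have hlenx : x.length = (wpow z m ++ r).length := by
    rw [List.length_append, wpow_length, hrlen, ← hLdef, hmdef, hsdef]
    have := Nat.div_add_mod x.length L
    rw [Nat.mul_comm] at this
    omega
  obtain ⟨hx, hy⟩ := List.append_inj hxy2 hlenx
  refine ⟨r, q, m, n, ?_, hmn, by rwa [hzrq], by rwa [hzrq], hzrq.symm⟩
  intro hrq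
  apply hcomm
  have hqz : q ++ z = z ++ q := by
    rw [← hzrq, ← List.append_assoc, ← hrq, List.append_assoc]
  calc x ++ y = wpow z l := h
    _ = wpow z (n + m) ++ z := by rw [← wpow_succ]; congr 1; omega
    _ = wpow z (n + m) ++ (q ++ r) := by rw [← hzrq, hrq]
    _ = q ++ wpow z (n + m) ++ r := by
        rw [wpow_comm hqz, List.append_assoc]
    _ = q ++ wpow z n ++ (wpow z m ++ r) := by
        rw [wpow_add]; simp [List.append_assoc]
    _ = y ++ x := by rw [← hx, ← hy]
end

section
/- Let x, u, v, p be words with p in the submonoid generated by {u,v}, x a prefix of v·x, x a suffix of p·u·v·u, and |x| > |v·u|. Then u and v commute. -/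
namespace PSP
variable {α : Type*}

/-- n-fold concatenation power of a word. -/
def pw (w : List α) : ℕ → List α
  | 0 => []
  | n+1 => w ++ pw w n

@[simp] lemma pw_zero (w : List α) : pw w 0 = [] := rfl

lemma pw_succ (w : List α) (n : ℕ) : pw w (n+1) = w ++ pw w n := rfl

@[simp] lemma length_pw (w : List α) (n : ℕ) : (pw w n).length = n * w.length := by
  induction n with
  | zero => simp
  | succ n ih => simp [pw, ih, Nat.succ_mul]; omega

lemma pw_add (w : List α) (m n : ℕ) : pw w (m+n) = pw w m ++ pw w n := by
  induction m with
  | zero => simp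
  | succ m ih =>
    have : m + 1 + n = (m + n) + 1 := by omega
    rw [this, pw_succ, ih, pw_succ, List.append_assoc]

lemma pw_comm (w : List α) (n : ℕ) : w ++ pw w n = pw w n ++ w := by
  induction n with
  | zero => simp
  | succ n ih => rw [pw_succ, List.append_assoc, ih]

@[simp] lemma pw_one (w : List α) : pw w 1 = w := by simp [pw]

@[simp] lemma pw_nil (n : ℕ) : pw ([] : List α) n = [] := by
  induction n with
  | zero => rfl
  | succ n ih => simp [pw, ih]

lemma pw_pw (w : List α) (a b : ℕ) : pw (pw w a) b = pw w (b * a) := by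
  induction b with
  | zero => simp
  | succ b ih => rw [pw_succ, ih, Nat.succ_mul, Nat.add_comm, pw_add]

lemma pw_reverse (w : List α) (n : ℕ) : (pw w n).reverse = pw w.reverse n := by
  induction n with
  | zero => simp
  | succ n ih => rw [pw_succ, List.reverse_append, ih, ← pw_comm, ← pw_succ]

lemma pw_eq_nil {w : List α} {n : ℕ} (h : pw w n = []) (hn : 1 ≤ n) : w = [] := by
  have := congrArg List.length h
  simp at this
  rcases this with h1 | h1
  · omega
  · exact h1

lemma pw_ne_nil {w : List α} (hw : w ≠ []) {n : ℕ} (hn : 1 ≤ n) : pw w n ≠ [] :=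
  fun h => hw (pw_eq_nil h hn)

lemma pw_split_last {ρ : List α} {c : ℕ} (hc : 1 ≤ c) : pw ρ c = pw ρ (c-1) ++ ρ := by
  conv_lhs => rw [show c = (c-1)+1 by omega]
  rw [pw_succ, pw_comm]

lemma rho_suffix_pw {ρ : List α} {c : ℕ} (hc : 1 ≤ c) : ρ <:+ pw ρ c :=
  ⟨pw ρ (c-1), (pw_split_last hc).symm⟩

lemma rho_prefix_pw {ρ : List α} {c : ℕ} (hc : 1 ≤ c) : ρ <+: pw ρ c := by
  refine ⟨pw ρ (c-1), ?_⟩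
  conv_rhs => rw [show c = 1+(c-1) by omega]
  rw [pw_add, pw_one]

/- utilities on prefixes/suffixes -/

lemma suffix_eq_of_length {s₁ s₂ t : List α} (h1 : s₁ <:+ t) (h2 : s₂ <:+ t)
    (h : s₁.length = s₂.length) : s₁ = s₂ := by
  obtain ⟨a, ha⟩ := h1
  obtain ⟨b, hb⟩ := h2
  have hab : a ++ s₁ = b ++ s₂ := by rw [ha, hb]
  have hl : a.length = b.length := by
    have h3 := congrArg List.length ha
    have h4 := congrArg List.length hb
    simp only [List.length_append] at h3 h4
    omega
  exact (List.append_inj hab hl).2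

lemma suffix_of_suffix_append {a w b : List α} (h : a <:+ w ++ b) (hl : a.length ≤ b.length) :
    a <:+ b :=
  List.suffix_of_suffix_length_le h (List.suffix_append w b) hl

lemma suffix_cut {s₁ s₂ t : List α} (h1 : s₁ <:+ t) (h2 : s₂ <:+ t)
    (h : s₁.length ≤ s₂.length) : s₁ <:+ s₂ :=
  List.suffix_of_suffix_length_le h1 h2 h

/-- transfer of a periodic root to a prefix -/
lemma pref_root_trans {y z a : List α} (hyz : y <+: z) (hz : z <+: a ++ z) : y <+: a ++ y := by
  have h1 : y <+: a ++ z := hyz.trans hz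
  have h2 : a ++ y <+: a ++ z := (List.prefix_append_right_inj a).mpr hyz
  exact List.prefix_of_prefix_length_le h1 h2 (by simp)

lemma pref_root_pow {y a : List α} (h : y <+: a ++ y) (n : ℕ) : y <+: pw a n ++ y := by
  induction n with
  | zero => simp
  | succ n ih =>
    have h2 : a ++ y <+: a ++ (pw a n ++ y) := (List.prefix_append_right_inj a).mpr ih
    have := h.trans h2
    rwa [← List.append_assoc, ← pw_succ] at this

lemma pref_root_pw {y a : List α} (h : y <+: a ++ y) {n : ℕ} (hn : y.length ≤ n * a.length) :
    y <+: pw a n := by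
  have h1 := pref_root_pow h n
  exact List.prefix_of_prefix_length_le h1 (List.prefix_append _ _) (by simpa)

lemma pref_split {y a : List α} (h : y <+: a ++ y) (hl : a.length ≤ y.length) :
    y = a ++ y.drop a.length ∧ y.drop a.length = y.take (y.length - a.length) := by
  have h1 : y = (a ++ y).take y.length := List.prefix_iff_eq_take.mp h
  rw [List.take_append, List.take_of_length_le hl] at h1
  have h2 : y.drop a.length = y.take (y.length - a.length) := by
    nth_rewrite 1 [h1]
    rw [List.drop_left]
  exact ⟨by rw [h2]; exact h1, h2⟩

lemma pref_head {y a : List α} (h : y <+: a ++ y) (hl : a.length ≤ y.length) : a <+: y :=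
  List.prefix_of_prefix_length_le (List.prefix_append a y) h hl



lemma take_pw {ρ : List α} {L n : ℕ} (hn : 1 ≤ n) (hL : L ≤ ρ.length) :
    (pw ρ n).take L = ρ.take L := by
  conv_lhs => rw [show n = 1+(n-1) by omega]
  rw [pw_add, pw_one, List.take_append,
    show L - ρ.length = 0 by omega, List.take_zero, List.append_nil]

lemma take_pw_append {ρ D : List α} {L n : ℕ} (hn : 1 ≤ n) (hL : L ≤ ρ.length) :
    (pw ρ n ++ D).take L = ρ.take L := by
  conv_lhs => rw [show n = 1+(n-1) by omega]
  rw [pw_add, pw_one, List.append_assoc, List.take_append,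
    show L - ρ.length = 0 by omega, List.take_zero, List.append_nil]

/-- decomposition of a prefix of a power -/
lemma pref_pw_decomp {ρ : List α} (hρ : ρ ≠ []) :
    ∀ (N : ℕ) (y : List α), y <+: pw ρ N →
    ∃ j D, D <+: ρ ∧ D.length < ρ.length ∧ y = pw ρ j ++ D := by
  intro N
  induction N with
  | zero =>
    intro y hy
    simp only [pw_zero, List.prefix_nil] at hy
    exact ⟨0, [], List.nil_prefix, by simpa using List.length_pos_iff.mpr hρ, by simp [hy]⟩
  | succ N ih =>
    intro y hy
    rw [pw_succ] at hy
    by_cases hl : y.length < ρ.length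
    · have h1 : y <+: ρ :=
        List.prefix_of_prefix_length_le hy (List.prefix_append ρ (pw ρ N)) (le_of_lt hl)
      exact ⟨0, y, h1, hl, by simp⟩
    · push_neg at hl
      have hρy : ρ <+: y :=
        List.prefix_of_prefix_length_le (List.prefix_append ρ (pw ρ N)) hy hl
      obtain ⟨y₂, rfl⟩ := hρy
      have h2 : y₂ <+: pw ρ N := by
        have := (List.prefix_append_right_inj ρ).mp hy
        exact this
      obtain ⟨j, D, hD1, hD2, hD3⟩ := ih y₂ h2
      exact ⟨j+1, D, hD1, hD2, by rw [hD3, pw_succ, List.append_assoc]⟩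

/-- decomposition of a suffix of a power -/
lemma suf_pw_decomp {P : List α} (hP : P ≠ []) {N : ℕ} {z : List α} (hz : z <:+ pw P N) :
    ∃ D a, D <:+ P ∧ D.length < P.length ∧ z = D ++ pw P a := by
  have h1 : z.reverse <+: (pw P N).reverse := List.reverse_prefix.mpr hz
  rw [pw_reverse] at h1
  obtain ⟨j, D, hD1, hD2, hD3⟩ := pref_pw_decomp (by simpa using hP) N z.reverse h1
  refine ⟨D.reverse, j, ?_, by simpa using hD2, ?_⟩
  · rw [← List.reverse_prefix]
    simpa using hD1
  · have := congrArg List.reverse hD3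
    simpa [pw_reverse] using this

/-- primitivity -/
def Prim (ρ : List α) : Prop := ∀ A B, ρ = A ++ B → ρ = B ++ A → A = [] ∨ B = []

lemma rot_contra {ρ : List α} (hprim : Prim ρ) {e : ℕ} (he : 0 < e) (he2 : e < ρ.length)
    (h : ρ = ρ.drop e ++ ρ.take e) : False := by
  rcases hprim (ρ.take e) (ρ.drop e) (List.take_append_drop e ρ).symm h with h1 | h1
  · have h2 := congrArg List.length h1
    simp only [List.length_take, List.length_nil] at h2
    omega
  · have h2 := congrArg List.length h1
    simp only [List.length_drop, List.length_nil] at h2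
    omega

/-- commuting words have a common root -/
lemma comm_root : ∀ (n : ℕ) (A B : List α), A.length + B.length ≤ n →
    A ++ B = B ++ A → ∃ w i j, A = pw w i ∧ B = pw w j := by
  intro n
  induction n with
  | zero =>
    intro A B hn _
    have hA : A = [] := by
      cases A <;> simp_all
    have hB : B = [] := by
      cases B <;> simp_all
    exact ⟨[], 0, 0, by simp [hA], by simp [hB]⟩
  | succ n ih =>
    intro A B hn hcomm
    by_cases hA : A = []
    · exact ⟨B, 0, 1, by simp [hA], by simp⟩
    by_cases hB : B = []
    · exact ⟨A, 1, 0, by simp, by simp [hB]⟩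
    have hApos : 0 < A.length := List.length_pos_iff.mpr hA
    have hBpos : 0 < B.length := List.length_pos_iff.mpr hB
    rcases le_or_gt A.length B.length with hle | hlt
    · have hpref : A <+: B := by
        have h1 : A <+: B ++ A := ⟨B, hcomm⟩
        exact List.prefix_of_prefix_length_le h1 (List.prefix_append B A) hle
      obtain ⟨C, rfl⟩ := hpref
      have hcomm2 : A ++ C = C ++ A := by
        have := hcomm
        rw [List.append_assoc A C A] at this
        exact List.append_cancel_left this
      obtain ⟨w, i, j, hw1, hw2⟩ := ih A C (by simp at hn ⊢; omega) hcomm2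
      exact ⟨w, i, i + j, hw1, by rw [pw_add, hw1, hw2]⟩
    · have hpref : B <+: A := by
        have h1 : B <+: A ++ B := ⟨A, hcomm.symm⟩
        exact List.prefix_of_prefix_length_le h1 (List.prefix_append A B) (le_of_lt hlt)
      obtain ⟨C, rfl⟩ := hpref
      have hcomm2 : B ++ C = C ++ B := by
        have := hcomm.symm
        rw [List.append_assoc B C B] at this
        exact List.append_cancel_left this
      obtain ⟨w, i, j, hw1, hw2⟩ := ih B C (by simp at hn ⊢; omega) hcomm2
      exact ⟨w, i + j, i, by rw [pw_add, hw1, hw2], hw1⟩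



/-- Fine and Wilf periodicity theorem, word-equation form. -/
lemma fw : ∀ (n : ℕ) (A B y : List α), A.length + B.length ≤ n →
    y <+: A ++ y → y <+: B ++ y →
    A.length + B.length - Nat.gcd A.length B.length ≤ y.length →
    A ++ B = B ++ A := by
  intro n
  induction n with
  | zero =>
    intro A B y hn _ _ _
    have hA : A = [] := by cases A <;> simp_all
    have hB : B = [] := by cases B <;> simp_all
    simp [hA, hB]
  | succ n ih =>
    have key : ∀ A B y : List α, A ≠ [] → B ≠ [] → A.length ≤ B.length →
        A.length + B.length ≤ n + 1 →
        y <+: A ++ y → y <+: B ++ y →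
        A.length + B.length - Nat.gcd A.length B.length ≤ y.length →
        A ++ B = B ++ A := by
      intro A B y hA hB hle hn hyA hyB hbound
      have hApos : 0 < A.length := List.length_pos_iff.mpr hA
      have hBpos : 0 < B.length := List.length_pos_iff.mpr hB
      have hg : Nat.gcd A.length B.length ≤ A.length := Nat.gcd_le_left _ hApos
      have hBy : B.length ≤ y.length := by omega
      have hAy : A.length ≤ y.length := by omega
      have hAy' : A <+: y := pref_head hyA hAy
      have hBy' : B <+: y := pref_head hyB hBy
      have hAB : A <+: B := List.prefix_of_prefix_length_le hAy' hBy' hle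
      obtain ⟨C, rfl⟩ := hAB
      by_cases hC : C = []
      · simp [hC]
      -- split y
      obtain ⟨hysplit, hydrop⟩ := pref_split hyA hAy
      set y₂ := y.drop A.length with hy₂
      have hy₂pref : y₂ <+: y := by rw [hydrop]; exact List.take_prefix _ _
      have hy₂A : y₂ <+: A ++ y₂ := pref_root_trans hy₂pref hyA
      have hy₂C : y₂ <+: C ++ y₂ := by
        have h1 : y = (A ++ (C ++ y)).take y.length := by
          have := List.prefix_iff_eq_take.mp hyB
          rwa [List.append_assoc] at this
        have h2 : y₂ = (C ++ y).take (y.length - A.length) := by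
          rw [hy₂]
          nth_rewrite 1 [h1]
          rw [List.take_append, List.take_of_length_le hAy, List.drop_left]
        have h3 : y₂ <+: C ++ y := by rw [h2]; exact List.take_prefix _ _
        have h4 : C ++ y₂ <+: C ++ y := (List.prefix_append_right_inj C).mpr hy₂pref
        exact List.prefix_of_prefix_length_le h3 h4 (by simp)
      have hgcd : Nat.gcd A.length (A ++ C).length = Nat.gcd A.length C.length := by
        rw [List.length_append, Nat.add_comm, Nat.gcd_add_self_right]
      have hy₂len : y₂.length = y.length - A.length := by
        simp [hy₂]
      have hbound2 : A.length + C.length - Nat.gcd A.length C.length ≤ y₂.length := by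
        rw [hgcd] at hbound
        simp only [List.length_append] at hbound hn ⊢
        have hg2 : Nat.gcd A.length C.length ≤ A.length := Nat.gcd_le_left _ hApos
        omega
      have hsum : A.length + C.length ≤ n := by
        simp only [List.length_append] at hn
        omega
      have hAC := ih A C y₂ hsum hy₂A hy₂C hbound2
      rw [List.append_assoc A C A, ← hAC]
    intro A B y hn hyA hyB hbound
    by_cases hA : A = []
    · simp [hA]
    by_cases hB : B = []
    · simp [hB]
    rcases le_or_gt A.length B.length with hle | hlt
    · exact key A B y hA hB hle hn hyA hyB hbound
    · have := key B A y hB hA (le_of_lt hlt) (by omega) hyB hyA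
        (by rw [Nat.gcd_comm]; omega)
      exact this.symm

lemma lcm_lower {m n : ℕ} (hm : 0 < m) (hn : 0 < n) :
    m + n - Nat.gcd m n ≤ Nat.lcm m n := by
  obtain ⟨a, ha⟩ := Nat.gcd_dvd_left m n
  obtain ⟨b, hb⟩ := Nat.gcd_dvd_right m n
  set g := Nat.gcd m n with hg
  have hgpos : 0 < g := Nat.gcd_pos_of_pos_left _ hm
  have hlcm : Nat.lcm m n = g * (a * b) := by
    have h1 : g * Nat.lcm m n = m * n := Nat.gcd_mul_lcm m n
    have h2 : m * n = g * (g * (a * b)) := by rw [ha, hb]; ring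
    rw [h2] at h1
    exact Nat.eq_of_mul_eq_mul_left hgpos h1
  have hapos : 0 < a := by
    rcases Nat.eq_zero_or_pos a with h | h
    · rw [h, Nat.mul_zero] at ha; omega
    · exact h
  have hbpos : 0 < b := by
    rcases Nat.eq_zero_or_pos b with h | h
    · rw [h, Nat.mul_zero] at hb; omega
    · exact h
  have hab : a + b - 1 ≤ a * b := by
    obtain ⟨a', rfl⟩ : ∃ a', a = a' + 1 := ⟨a - 1, by omega⟩
    obtain ⟨b', rfl⟩ : ∃ b', b = b' + 1 := ⟨b - 1, by omega⟩
    have : (a' + 1) * (b' + 1) = a' * b' + a' + b' + 1 := by ring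
    omega
  rw [hlcm, ha, hb]
  calc g * a + g * b - g = g * (a + b - 1) := by
        rw [Nat.mul_sub, Nat.mul_add, Nat.mul_one]
    _ ≤ g * (a * b) := Nat.mul_le_mul_left g hab

/-- equal powers implies commuting roots -/
lemma eq_pows_comm {A B : List α} {a b : ℕ} (h : pw A a = pw B b) (ha : 1 ≤ a) (hb : 1 ≤ b) :
    A ++ B = B ++ A := by
  by_cases hA : A = []
  · subst hA
    simp only [pw_nil] at h
    have : B = [] := pw_eq_nil h.symm hb
    simp [this]
  by_cases hB : B = []
  · subst hB
    simp only [pw_nil] at h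
    have : A = [] := pw_eq_nil h ha
    simp [this]
  have hApos : 0 < A.length := List.length_pos_iff.mpr hA
  have hBpos : 0 < B.length := List.length_pos_iff.mpr hB
  have hXA : pw A a <+: A ++ pw A a := ⟨A, (pw_comm A a).symm⟩
  have hXB : pw A a <+: B ++ pw A a := ⟨B, by rw [h]; exact (pw_comm B b).symm⟩
  have hlenA : A.length ∣ (pw A a).length := by
    rw [length_pw]; exact Nat.dvd_mul_left _ _
  have hlenB : B.length ∣ (pw A a).length := by
    rw [h, length_pw]; exact Nat.dvd_mul_left _ _
  have hXpos : 0 < (pw A a).length := by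
    rw [length_pw]; exact Nat.mul_pos (by omega) hApos
  have hlcm : Nat.lcm A.length B.length ≤ (pw A a).length :=
    Nat.le_of_dvd hXpos (Nat.lcm_dvd hlenA hlenB)
  have hbound : A.length + B.length - Nat.gcd A.length B.length ≤ (pw A a).length :=
    le_trans (lcm_lower hApos hBpos) hlcm
  exact fw (A.length + B.length) A B (pw A a) le_rfl hXA hXB hbound

/-- a primitive word is not a proper power -/
lemma prim_pow_contra {ρ w : List α} (hprim : Prim ρ) (hρ : ρ ≠ []) {e : ℕ}
    (h : ρ = pw w e) (he : 2 ≤ e) : False := by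
  have hw : w ≠ [] := by
    intro hw
    rw [hw, pw_nil] at h
    exact hρ h
  have h1 : ρ = w ++ pw w (e-1) := by
    rw [h]; conv_lhs => rw [show e = 1+(e-1) by omega]
    rw [pw_add, pw_one]
  have h2 : ρ = pw w (e-1) ++ w := by
    rw [h1, pw_comm]
  rcases hprim w (pw w (e-1)) h1 h2 with h3 | h3
  · exact hw h3
  · exact hw (pw_eq_nil h3 (by omega))

/-- a nonempty word shorter than primitive ρ cannot commute with ρ -/
lemma comm_short_contra {ρ Q : List α} (hprim : Prim ρ) (hρ : ρ ≠ []) (hQ : Q ≠ [])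
    (hlen : Q.length < ρ.length) (hcomm : Q ++ ρ = ρ ++ Q) : False := by
  obtain ⟨w, i, j, hQw, hρw⟩ := comm_root (Q.length + ρ.length) Q ρ le_rfl hcomm
  have hw : w ≠ [] := by
    intro h
    rw [h, pw_nil] at hρw
    exact hρ hρw
  have hi : 1 ≤ i := by
    rcases Nat.eq_zero_or_pos i with h | h
    · rw [h, pw_zero] at hQw; exact absurd hQw hQ
    · exact h
  have hwpos : 0 < w.length := List.length_pos_iff.mpr hw
  have hQlen : Q.length = i * w.length := by rw [hQw]; simp
  have hρlen : ρ.length = j * w.length := by rw [hρw]; simp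
  have hj : 2 ≤ j := by nlinarith
  exact prim_pow_contra hprim hρ hρw hj

/-- existence of the primitive root -/
lemma prim_exists : ∀ (n : ℕ) (w : List α), w.length ≤ n → w ≠ [] →
    ∃ ρ k, Prim ρ ∧ ρ ≠ [] ∧ 1 ≤ k ∧ w = pw ρ k := by
  intro n
  induction n with
  | zero =>
    intro w hn hw
    exact absurd (List.eq_nil_of_length_eq_zero (by omega)) hw
  | succ n ih =>
    intro w hn hw
    by_cases hP : Prim w
    · exact ⟨w, 1, hP, hw, le_rfl, by simp⟩
    · simp only [Prim, not_forall] at hP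
      obtain ⟨A, B, h1, h2, h3⟩ := hP
      push_neg at h3
      obtain ⟨hA, hB⟩ := h3
      have hcomm : A ++ B = B ++ A := by rw [← h1, ← h2]
      obtain ⟨w₀, i, j, hw1, hw2⟩ := comm_root (A.length + B.length) A B le_rfl hcomm
      have hw₀ : w₀ ≠ [] := by
        intro h
        rw [h, pw_nil] at hw1
        exact hA hw1
      have hi : 1 ≤ i := by
        rcases Nat.eq_zero_or_pos i with h | h
        · rw [h, pw_zero] at hw1; exact absurd hw1 hA
        · exact h
      have hj : 1 ≤ j := by
        rcases Nat.eq_zero_or_pos j with h | h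
        · rw [h, pw_zero] at hw2; exact absurd hw2 hB
        · exact h
      have hwij : w = pw w₀ (i + j) := by rw [h1, pw_add, hw1, hw2]
      have hw₀pos : 0 < w₀.length := List.length_pos_iff.mpr hw₀
      have hlen : w₀.length ≤ n := by
        have h4 : w.length = (i+j) * w₀.length := by rw [hwij]; simp
        nlinarith
      obtain ⟨ρ, k, hk1, hk2, hk3, hk4⟩ := ih w₀ hlen hw₀
      exact ⟨ρ, (i+j) * k, hk1, hk2, by nlinarith, by rw [hwij, hk4, pw_pw]⟩



/-- a power of a primitive ρ cannot be a suffix-misaligned power of its own prefix -/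
lemma runcap {ρ : List α} (hprim : Prim ρ) (hρ : ρ ≠ []) {r : ℕ} (hr : 0 < r)
    (hrl : r < ρ.length) {P₄ : List α} {c₂ a : ℕ} (hc₂ : 1 ≤ c₂)
    (hP₄s : P₄ <:+ ρ.take r) (hP₄l : P₄.length < r)
    (heq : pw ρ c₂ = P₄ ++ pw (ρ.take r) a) : False := by
  have hPlen : (ρ.take r).length = r := by simp; omega
  have hPne : ρ.take r ≠ [] := by
    intro h; rw [h] at hPlen; simp at hPlen; omega
  have hlens : c₂ * ρ.length = P₄.length + a * r := by
    have := congrArg List.length heq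
    simpa [hPlen] using this
  have ha : 1 ≤ a := by
    by_contra h
    have ha0 : a = 0 := by omega
    rw [ha0] at hlens
    have : ρ.length ≤ c₂ * ρ.length := Nat.le_mul_of_pos_left _ (by omega)
    omega
  by_cases hP₄ : P₄ = []
  · rw [hP₄, List.nil_append] at heq
    have hcomm := eq_pows_comm heq hc₂ ha
    exact comm_short_contra hprim hρ hPne (by omega) hcomm.symm
  · -- P has root P₄
    have hPpref : ρ.take r = P₄ ++ (ρ.take r).take (r - P₄.length) := by
      have h1 : ρ.take r = (pw ρ c₂).take r := (take_pw hc₂ (le_of_lt hrl)).symm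
      rw [heq, List.take_append,
        List.take_of_length_le (by omega : P₄.length ≤ r),
        take_pw ha (by omega : r - P₄.length ≤ (ρ.take r).length)] at h1
      exact h1
    have hProot : ρ.take r <+: P₄ ++ ρ.take r := by
      nth_rewrite 1 [hPpref]
      exact (List.prefix_append_right_inj P₄).mpr (List.take_prefix _ _)
    have hP₄pos : 0 < P₄.length := List.length_pos_iff.mpr hP₄
    have hPpw : ρ.take r <+: pw P₄ (ρ.take r).length :=
      pref_root_pw hProot (Nat.le_mul_of_pos_right _ hP₄pos)
    obtain ⟨t, D, hD1, hD2, hD3⟩ := pref_pw_decomp hP₄ _ _ hPpw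
    have hDtake : D = P₄.take D.length := List.prefix_iff_eq_take.mp hD1
    have hlens2 : r = t * P₄.length + D.length := by
      have := congrArg List.length hD3
      simpa [hPlen] using this
    have ht : 1 ≤ t := by
      rcases Nat.eq_zero_or_pos t with h | h
      · rw [h] at hlens2; simp at hlens2; omega
      · exact h
    -- P₄ is a suffix of P; derive the rotation equation
    have hrot : P₄ = P₄.drop D.length ++ D := by
      have hs0 : P₄.drop D.length ++ D <:+ P₄ ++ D :=
        ⟨P₄.take D.length, by rw [← List.append_assoc, List.take_append_drop]⟩
      have hs1 : P₄.drop D.length ++ D <:+ ρ.take r := by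
        rw [hD3, pw_split_last ht, List.append_assoc]
        exact hs0.trans (List.suffix_append _ _)
      exact suffix_eq_of_length hP₄s hs1 (by simp; omega)
    by_cases hD : D = []
    · -- P = pw P₄ t exactly
      rw [hD, List.append_nil] at hD3
      rw [hD3, pw_pw] at heq
      have heq2 : pw ρ c₂ = pw P₄ (1 + a * t) := by
        rw [pw_add, pw_one, heq]
      have hcomm := eq_pows_comm heq2 hc₂ (by omega)
      exact comm_short_contra hprim hρ hP₄ (by omega) hcomm.symm
    · have hAB : D ++ P₄.drop D.length = P₄.drop D.length ++ D := by
        have h5 := List.take_append_drop D.length P₄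
        rw [← hDtake] at h5
        exact h5.trans hrot
      obtain ⟨w, i, j, hw1, hw2⟩ := comm_root _ D (P₄.drop D.length) le_rfl hAB
      have hw : w ≠ [] := by
        intro h; rw [h, pw_nil] at hw1; exact hD hw1
      have hwpos : 0 < w.length := List.length_pos_iff.mpr hw
      have hi : 1 ≤ i := by
        rcases Nat.eq_zero_or_pos i with h | h
        · rw [h, pw_zero] at hw1; exact absurd hw1 hD
        · exact h
      have hP₄w : P₄ = pw w (i + j) := by
        have h5 := List.take_append_drop D.length P₄
        rw [← hDtake] at h5
        rw [pw_add, ← hw1, ← hw2]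
        exact h5.symm
      have hPw : ρ.take r = pw w (t * (i+j) + i) := by
        rw [hD3, hP₄w, pw_pw, hw1, pw_add]
      have heq3 : pw ρ c₂ = pw w ((i+j) + a * (t * (i+j) + i)) := by
        rw [heq, hP₄w, hPw, pw_pw, ← pw_add]
      have hcomm := eq_pows_comm heq3 hc₂ (by omega)
      have hwD : w.length ≤ D.length := by
        have : D.length = i * w.length := by rw [hw1]; simp
        nlinarith
      exact comm_short_contra hprim hρ hw (by omega) hcomm.symm

lemma tail_decomp {P : List α} (hP : P ≠ []) {E : ℕ} (hE : 1 ≤ E) :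
    ∀ (n : ℕ) (Z : List α), Z.length ≤ n → Z = Z.drop (E * P.length) ++ pw P E →
    ∃ D a, D <:+ P ∧ D.length < P.length ∧ Z = D ++ pw P a := by
  have hPpos : 0 < P.length := List.length_pos_iff.mpr hP
  have hq : 1 ≤ E * P.length := Nat.mul_pos (by omega) hPpos
  intro n
  induction n with
  | zero =>
    intro Z hn hZ
    have := congrArg List.length hZ
    simp at this
    omega
  | succ n ih =>
    intro Z hn hZ
    have hlen : E * P.length ≤ Z.length := by
      have := congrArg List.length hZ
      simp at this
      omega
    by_cases h2 : E * P.length ≤ (Z.drop (E * P.length)).length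
    · have hZ₂ : Z.drop (E * P.length) =
          (Z.drop (E * P.length)).drop (E * P.length) ++ pw P E := by
        conv_lhs => rw [hZ]
        rw [List.drop_append,
          show E * P.length - (Z.drop (E * P.length)).length = 0 by omega,
          List.drop_zero]
      obtain ⟨D, a, hD1, hD2, hD3⟩ := ih (Z.drop (E * P.length)) (by simp; omega) hZ₂
      refine ⟨D, a + E, hD1, hD2, ?_⟩
      rw [hZ, hD3, List.append_assoc, ← pw_add]
    · have h3 : (Z.drop (E * P.length)).drop (E * P.length) = [] := by
        apply List.drop_eq_nil_of_le; omega
      have hZ₂suf : Z.drop (E * P.length) <:+ pw P E := by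
        conv_lhs => rw [hZ]
        rw [List.drop_append, h3, List.nil_append]
        exact List.drop_suffix _ _
      obtain ⟨D, a, hD1, hD2, hD3⟩ := suf_pw_decomp hP hZ₂suf
      refine ⟨D, a + E, hD1, hD2, ?_⟩
      rw [hZ, hD3, List.append_assoc, ← pw_add]

lemma star {ρ : List α} (hprim : Prim ρ) (hρ : ρ ≠ []) {r d E c : ℕ}
    (hr : 0 < r) (hrl : r < ρ.length) (hd : 0 < d) (hdl : d < ρ.length)
    (hE : 1 ≤ E) (hc : 1 ≤ c)
    (hB : ρ.take d = ρ.drop (ρ.length - d))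
    (heq : pw ρ c = ρ.take d ++ pw (ρ.take r) E) : False := by
  have hPlen : (ρ.take r).length = r := by simp; omega
  have hPne : ρ.take r ≠ [] := by
    intro h; rw [h] at hPlen; simp at hPlen; omega
  have hlens : c * ρ.length = d + E * r := by
    have := congrArg List.length heq
    simpa [hPlen, show min d ρ.length = d by omega] using this
  by_cases hc2 : 2 ≤ c
  · have hlenEr : ρ.length ≤ E * r := by nlinarith
    have hρsuf : ρ <:+ pw (ρ.take r) E := by
      have h1 := rho_suffix_pw hc (ρ := ρ)
      rw [heq] at h1
      exact suffix_of_suffix_append h1 (by rw [length_pw, hPlen]; omega)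
    obtain ⟨D, a, hD1, hD2, hD3⟩ := suf_pw_decomp hPne hρsuf
    rw [hPlen] at hD2
    have heqR : pw ρ 1 = D ++ pw (ρ.take r) a := by rw [pw_one]; exact hD3
    exact runcap hprim hρ hr hrl le_rfl hD1 hD2 heqR
  · have hc1 : c = 1 := by omega
    rw [hc1, pw_one] at heq
    have hlens1 : ρ.length = d + E * r := by
      rw [hc1, one_mul] at hlens; exact hlens
    by_cases hdE : d ≤ E * r
    · have hDsuf : ρ.take d <:+ ρ := by rw [hB]; exact List.drop_suffix _ _
      have h1 : ρ.take d <:+ pw (ρ.take r) E := by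
        have h0 := hDsuf
        nth_rewrite 2 [heq] at h0
        exact suffix_of_suffix_append h0
          (by rw [length_pw, hPlen]; simp; omega)
      obtain ⟨D, a, hD1, hD2, hD3⟩ := suf_pw_decomp hPne h1
      rw [hPlen] at hD2
      have heqR : pw ρ 1 = D ++ pw (ρ.take r) (a + E) := by
        rw [pw_one]
        conv_lhs => rw [heq]
        rw [hD3, List.append_assoc, ← pw_add]
      exact runcap hprim hρ hr hrl le_rfl hD1 hD2 heqR
    · push_neg at hdE
      have htake : (ρ.take d).length = d := by simp; omega
      have hself : ρ.take d = (ρ.take d).drop (E * (ρ.take r).length) ++ pw (ρ.take r) E := by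
        rw [hPlen]
        have h1 : ρ.take d = ρ.drop (E * r) := by
          rw [hB]; congr 1; omega
        conv_lhs => rw [h1, heq]
        rw [List.drop_append, htake,
          show E * r - d = 0 by omega, List.drop_zero]
      obtain ⟨D, a, hD1, hD2, hD3⟩ := tail_decomp hPne hE (ρ.take d).length _ le_rfl hself
      rw [hPlen] at hD2
      have heqR : pw ρ 1 = D ++ pw (ρ.take r) (a + E) := by
        rw [pw_one]
        conv_lhs => rw [heq]
        rw [hD3, List.append_assoc, ← pw_add]
      exact runcap hprim hρ hr hrl le_rfl hD1 hD2 heqR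



lemma take_len_append {X Y : List α} {L : ℕ} (h : X.length ≤ L) :
    (X ++ Y).take L = X ++ Y.take (L - X.length) := by
  rw [List.take_append, List.take_of_length_le h]

lemma flatten_replicate (u : List α) (e : ℕ) : (List.replicate e u).flatten = pw u e := by
  induction e with
  | zero => simp
  | succ e ih => rw [List.replicate_succ, List.flatten_cons, ih, pw_succ]

lemma dec (u v : List α) : ∀ l : List (List α), (∀ a ∈ l, a = u ∨ a = v) →
    ∃ l₁ e, l = l₁ ++ List.replicate e u ∧ (l₁ = [] ∨ ∃ l₂, l₁ = l₂ ++ [v]) := by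
  intro l
  induction l using List.reverseRecOn with
  | nil => exact fun _ => ⟨[], 0, by simp, Or.inl rfl⟩
  | append_singleton l a ih =>
    intro h
    rcases h a (by simp) with ha | ha
    · obtain ⟨l₁, e, h1, h2⟩ := ih (fun b hb => h b (by simp [hb]))
      refine ⟨l₁, e+1, ?_, h2⟩
      rw [ha, h1, List.append_assoc, List.replicate_succ']
    · exact ⟨l ++ [a], 0, by simp, Or.inr ⟨l, by rw [ha]⟩⟩

/-- The central kernel lemma. -/
lemma kernel {ρ u v : List α} {r m k c : ℕ} (hprim : Prim ρ) (hρ : ρ ≠ [])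
    (hr : 0 < r) (hrl : r < ρ.length)
    (hu : u = pw ρ m ++ ρ.take r) (hv : v = pw ρ k) (hk : 1 ≤ k) (hc : 1 ≤ c)
    (l : List (List α)) (hl : ∀ a ∈ l, a = u ∨ a = v)
    (hsuf : pw ρ c <:+ l.flatten ++ u) : False := by
  have hρpos : 0 < ρ.length := List.length_pos_iff.mpr hρ
  have hPlen : (ρ.take r).length = r := by simp; omega
  have hulen : u.length = m * ρ.length + r := by rw [hu]; simp [hPlen]
  have hune : u ≠ [] := by
    intro h
    rw [h] at hulen; simp at hulen; omega
  -- Step K1 : m = 0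
  have hm : m = 0 := by
    by_contra hm0
    have hm1 : 1 ≤ m := by omega
    by_cases hcu : c * ρ.length ≤ u.length
    · have h1 : pw ρ c <:+ u := suffix_of_suffix_append hsuf (by simp; omega)
      have h2 : ρ <:+ u := (rho_suffix_pw hc).trans h1
      have h3 : ρ.drop r ++ ρ.take r <:+ u := by
        rw [hu, pw_split_last hm1, List.append_assoc]
        refine List.IsSuffix.trans ?_ (List.suffix_append _ _)
        exact ⟨ρ.take r, by rw [← List.append_assoc, List.take_append_drop]⟩
      have h4 := suffix_eq_of_length h2 h3 (by simp; omega)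
      exact rot_contra hprim hr hrl h4
    · push_neg at hcu
      have h1 : u <:+ pw ρ c := suffix_cut (List.suffix_append _ _) hsuf (by simp; omega)
      have hmc : m + 1 ≤ c := by
        have h2 : m * ρ.length < c * ρ.length := by omega
        have := Nat.lt_of_mul_lt_mul_right h2
        omega
      have h3 : ρ.drop (ρ.length - r) ++ pw ρ m <:+ pw ρ c := by
        have hsplit : (pw ρ (c - (m+1)) ++ ρ.take (ρ.length - r)) ++
            (ρ.drop (ρ.length - r) ++ pw ρ m) = pw ρ c := by
          rw [List.append_assoc, ← List.append_assoc (ρ.take (ρ.length - r)),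
            List.take_append_drop, ← pw_succ, ← pw_add]
          congr 1
          omega
        exact ⟨_, hsplit⟩
      have h4 := suffix_eq_of_length h1 h3 (by simp [hulen]; omega)
      have h5 : pw ρ m ++ ρ.take r = ρ.drop (ρ.length - r) ++ pw ρ m := by
        rw [← hu]; exact h4
      have h6 := congrArg (List.take ρ.length) h5
      rw [take_pw_append hm1 le_rfl, List.take_length,
        take_len_append (by simp),
        show ρ.length - (ρ.drop (ρ.length - r)).length = ρ.length - r by simp; omega,
        take_pw hm1 (by omega)] at h6
      exact rot_contra hprim (by omega : 0 < ρ.length - r) (by omega) h6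
  rw [hm, pw_zero, List.nil_append] at hu
  rw [hm] at hulen
  simp only [Nat.zero_mul, Nat.zero_add] at hulen
  -- border : u = drop (|ρ| - r) ρ
  have h1 : u <:+ pw ρ c := suffix_cut (List.suffix_append _ _) hsuf
    (by simp [hulen]; nlinarith)
  have h2 : ρ.drop (ρ.length - r) <:+ pw ρ c := (List.drop_suffix _ _).trans (rho_suffix_pw hc)
  have hB0 := suffix_eq_of_length h1 h2 (by simp [hulen]; omega)
  -- decompose the list into l₁ ++ u-run
  obtain ⟨l₁, e, hl1, hl2⟩ := dec u v l hl
  have hfl : l.flatten ++ u = l₁.flatten ++ pw u (e+1) := by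
    rw [hl1, List.flatten_append, flatten_replicate, List.append_assoc]
    congr 1
    rw [pw_succ, pw_comm]
  rw [hfl] at hsuf
  have hEpos : 1 ≤ e + 1 := by omega
  by_cases hK4 : c * ρ.length ≤ (e+1) * r
  · have h3 : pw ρ c <:+ pw u (e+1) :=
      suffix_of_suffix_append hsuf (by simp [hulen]; omega)
    obtain ⟨D, a, hD1, hD2, hD3⟩ := suf_pw_decomp hune h3
    rw [hulen] at hD2
    rw [hu] at hD1 hD3
    exact runcap hprim hρ hr hrl hc hD1 hD2 hD3
  · push_neg at hK4
    have hPEsuf : pw u (e+1) <:+ pw ρ c :=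
      suffix_cut (List.suffix_append _ _) hsuf (by simp [hulen]; omega)
    obtain ⟨T, hT⟩ := hPEsuf
    have hTpref : T <+: pw ρ c := ⟨pw u (e+1), hT⟩
    obtain ⟨c₃, D₃, hD₃1, hD₃2, hD₃3⟩ := pref_pw_decomp hρ c T hTpref
    have hTlen : T.length + (e+1) * r = c * ρ.length := by
      have := congrArg List.length hT
      simpa [hulen] using this
    have hTlen2 : T.length = c₃ * ρ.length + D₃.length := by
      have := congrArg List.length hD₃3
      simpa using this
    obtain ⟨z₄, hz₄⟩ := hsuf
    have hTsuf : T <:+ l₁.flatten := by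
      refine ⟨z₄, ?_⟩
      have h4 : (z₄ ++ T) ++ pw u (e+1) = l₁.flatten ++ pw u (e+1) := by
        rw [List.append_assoc, hT, hz₄]
      exact List.append_cancel_right h4
    rcases hl2 with hl2 | ⟨l₃, hl3⟩
    · rw [hl2] at hTsuf
      simp only [List.flatten_nil, List.suffix_nil] at hTsuf
      rw [hTsuf] at hTlen
      simp at hTlen
      omega
    · rw [hl3] at hTsuf
      have hfl3 : (l₃ ++ [v]).flatten = l₃.flatten ++ v := by simp
      rw [hfl3] at hTsuf
      by_cases hd₃ : D₃ = []
      · -- aligned case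
        rw [hd₃, List.append_nil] at hD₃3
        rw [hd₃] at hTlen2
        simp only [List.length_nil, Nat.add_zero] at hTlen2
        have h5 : c₃ * ρ.length ≤ c * ρ.length := by omega
        have hc₃c : c₃ ≤ c := Nat.le_of_mul_le_mul_right h5 hρpos
        rw [hD₃3] at hT
        have h6 : pw ρ c₃ ++ pw u (e+1) = pw ρ c₃ ++ pw ρ (c - c₃) := by
          rw [hT, ← pw_add]
          congr 1
          omega
        have h7 := List.append_cancel_left h6
        have hcc₃ : 1 ≤ c - c₃ := by
          have h8 := congrArg List.length h7
          simp [hulen] at h8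
          rcases Nat.eq_zero_or_pos (c - c₃) with h9 | h9
          · rw [h9] at h8; simp at h8; omega
          · exact h9
        have hcomm := eq_pows_comm h7 hEpos hcc₃
        exact comm_short_contra hprim hρ hune (by omega) hcomm
      · have hd₃pos : 0 < D₃.length := List.length_pos_iff.mpr hd₃
        have hD₃take : D₃ = ρ.take D₃.length := List.prefix_iff_eq_take.mp hD₃1
        by_cases hTk : T.length ≤ k * ρ.length
        · have hTv : T <:+ pw ρ k := by
            have h5 := suffix_of_suffix_append hTsuf (by rw [hv]; simpa using hTk)
            rwa [hv] at h5
          by_cases hc₃0 : c₃ = 0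
          · rw [hc₃0, pw_zero, List.nil_append] at hD₃3
            have h8 : ρ.drop (ρ.length - D₃.length) <:+ pw ρ k :=
              (List.drop_suffix _ _).trans (rho_suffix_pw hk)
            have h9 := suffix_eq_of_length hTv h8 (by rw [hD₃3]; simp; omega)
            have hBstar : ρ.take D₃.length = ρ.drop (ρ.length - D₃.length) := by
              conv_lhs => rw [← hD₃take, ← hD₃3]
              exact h9
            have heqstar : pw ρ c = ρ.take D₃.length ++ pw (ρ.take r) (e+1) := by
              rw [← hT, hD₃3, hu]
              conv_lhs => rw [hD₃take]
            exact star hprim hρ hr hrl hd₃pos hD₃2 hEpos hc hBstar heqstar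
          · have hc₃1 : 1 ≤ c₃ := by omega
            have hkc₃ : c₃ + 1 ≤ k := by
              have h5 : c₃ * ρ.length < k * ρ.length := by omega
              have := Nat.lt_of_mul_lt_mul_right h5
              omega
            have hsub : T <:+ pw ρ (c₃ + 1) := by
              have h5 : pw ρ k = pw ρ (k - (c₃+1)) ++ pw ρ (c₃+1) := by
                rw [← pw_add]; congr 1; omega
              rw [h5] at hTv
              exact suffix_of_suffix_append hTv (by simp [Nat.add_mul]; omega)
            have h10 : ρ.drop (ρ.length - D₃.length) ++ pw ρ c₃ <:+ pw ρ (c₃+1) := by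
              refine ⟨ρ.take (ρ.length - D₃.length), ?_⟩
              rw [pw_succ, ← List.append_assoc, List.take_append_drop]
            have h11 := suffix_eq_of_length hsub h10 (by rw [hD₃3]; simp; omega)
            have h12 : pw ρ c₃ ++ D₃ = ρ.drop (ρ.length - D₃.length) ++ pw ρ c₃ := by
              rw [← hD₃3]; exact h11
            have h13 := congrArg (List.take ρ.length) h12
            rw [take_pw_append hc₃1 le_rfl, List.take_length,
              take_len_append (by simp),
              show ρ.length - (ρ.drop (ρ.length - D₃.length)).length = ρ.length - D₃.length
                by simp; omega,
              take_pw hc₃1 (by omega)] at h13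
            exact rot_contra hprim (by omega : 0 < ρ.length - D₃.length) (by omega) h13
        · push_neg at hTk
          have hvT : v <:+ T :=
            suffix_cut (List.suffix_append _ _) hTsuf (by rw [hv]; simp; omega)
          rw [hv] at hvT
          have hkc₃ : k ≤ c₃ := by
            have h5 : k * ρ.length < (c₃ + 1) * ρ.length := by
              rw [Nat.add_mul, Nat.one_mul]
              omega
            have := Nat.lt_of_mul_lt_mul_right h5
            omega
          have h10 : ρ.drop D₃.length ++ (pw ρ (k-1) ++ D₃) <:+ T := by
            rw [hD₃3]
            refine ⟨pw ρ (c₃ - k) ++ ρ.take D₃.length, ?_⟩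
            rw [List.append_assoc, ← List.append_assoc (ρ.take D₃.length),
              List.take_append_drop, ← List.append_assoc ρ, ← pw_succ, ← List.append_assoc,
              ← pw_add]
            have harith : c₃ - k + (k - 1 + 1) = c₃ := by omega
            rw [harith]
          have h11 := suffix_eq_of_length hvT h10
            (by
              have hkρ := Nat.le_mul_of_pos_left ρ.length (show 0 < k by omega)
              simp [Nat.sub_one_mul]; omega)
          have h13 := congrArg (List.take ρ.length) h11
          have hrhs : (ρ.drop D₃.length ++ (pw ρ (k-1) ++ D₃)).take ρ.length =
              ρ.drop D₃.length ++ ρ.take D₃.length := by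
            rw [take_len_append (by simp),
              show ρ.length - (ρ.drop D₃.length).length = D₃.length by simp; omega]
            congr 1
            by_cases hk2 : 2 ≤ k
            · exact take_pw_append (by omega) (by omega)
            · have hk1 : k = 1 := by omega
              rw [hk1]
              simp only [Nat.sub_self, pw_zero, List.nil_append]
              rw [List.take_of_length_le (by omega), ← hD₃take]
          rw [take_pw hk le_rfl, List.take_length, hrhs] at h13
          exact rot_contra hprim hd₃pos hD₃2 h13

end PSP

open PSP

/-- If `p` is generated by `{u,v}`, `x` is a prefix of `v·x`, `x` is a suffix of
`p·u·v·u`, and `|x| > |v·u|`, then `u` and `v` commute. -/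
theorem pref_suf_pers_short {α : Type*} (x u v p : List α)
    (hp : ∃ l : List (List α), (∀ a ∈ l, a = u ∨ a = v) ∧ l.flatten = p)
    (hpref : x <+: v ++ x)
    (hsuf : x <:+ p ++ u ++ v ++ u)
    (hlen : (v ++ u).length < x.length) :
    u ++ v = v ++ u := by
  classical
  by_cases hv0 : v = []
  · simp [hv0]
  obtain ⟨l, hl, hlp⟩ := hp
  obtain ⟨ρ, k, hprim, hρ, hk, hvρ⟩ := prim_exists v.length v le_rfl hv0
  have hρpos : 0 < ρ.length := List.length_pos_iff.mpr hρ
  have hxv : x <+: pw v x.length :=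
    pref_root_pw hpref (Nat.le_mul_of_pos_right _ (List.length_pos_iff.mpr hv0))
  have hxρ : x <+: pw ρ (x.length * k) := by
    rw [← pw_pw, ← hvρ]; exact hxv
  obtain ⟨z, hz⟩ := hsuf
  have hzx : z ++ x = (p ++ u) ++ (v ++ u) := by
    rw [hz, List.append_assoc (p ++ u) v u]
  have hvu_x : v ++ u <:+ x :=
    suffix_cut (List.suffix_append _ _) ⟨z, hzx⟩ (le_of_lt hlen)
  obtain ⟨x₁, hx₁⟩ := hvu_x
  have hx₁p : z ++ x₁ = p ++ u := by
    have h4 : (z ++ x₁) ++ (v ++ u) = (p ++ u) ++ (v ++ u) := by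
      rw [List.append_assoc, hx₁, hzx]
    exact List.append_cancel_right h4
  have hx₁ne : x₁ ≠ [] := by
    intro h
    rw [h, List.nil_append] at hx₁
    rw [← hx₁] at hlen
    omega
  have hx₁pos : 0 < x₁.length := List.length_pos_iff.mpr hx₁ne
  have hw₁pref : x₁ ++ v <+: x := ⟨u, by rw [List.append_assoc]; exact hx₁⟩
  have hw₁ρ : x₁ ++ v <+: pw ρ (x.length * k) := hw₁pref.trans hxρ
  obtain ⟨j₁, D₁, hD₁1, hD₁2, hD₁3⟩ := pref_pw_decomp hρ _ _ hw₁ρ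
  have hρv : ρ <:+ v := by rw [hvρ]; exact rho_suffix_pw hk
  have hρw₁ : ρ <:+ x₁ ++ v := hρv.trans (List.suffix_append x₁ v)
  have hw₁len : x₁.length + v.length = j₁ * ρ.length + D₁.length := by
    have := congrArg List.length hD₁3
    simpa using this
  have hvlen : v.length = k * ρ.length := by rw [hvρ]; simp
  have hkρ : ρ.length ≤ k * ρ.length := Nat.le_mul_of_pos_left _ (by omega)
  have hD₁nil : D₁ = [] := by
    by_contra hD₁0
    have hd : 0 < D₁.length := List.length_pos_iff.mpr hD₁0
    have hj₁ : 1 ≤ j₁ := by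
      rcases Nat.eq_zero_or_pos j₁ with h | h
      · rw [h] at hw₁len; simp at hw₁len; omega
      · exact h
    have h6 : ρ.drop D₁.length ++ D₁ <:+ pw ρ j₁ ++ D₁ := by
      refine ⟨pw ρ (j₁ - 1) ++ ρ.take D₁.length, ?_⟩
      rw [List.append_assoc, ← List.append_assoc (ρ.take D₁.length), List.take_append_drop,
        ← List.append_assoc, ← pw_split_last hj₁]
    have h7 : ρ <:+ pw ρ j₁ ++ D₁ := by rw [← hD₁3]; exact hρw₁
    have h8 := suffix_eq_of_length h7 h6 (by simp; omega)
    have hD₁take : D₁ = ρ.take D₁.length := List.prefix_iff_eq_take.mp hD₁1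
    have h9 : ρ = ρ.drop D₁.length ++ ρ.take D₁.length := by
      conv_rhs => rw [← hD₁take]
      exact h8
    exact rot_contra hprim hd hD₁2 h9
  rw [hD₁nil, List.append_nil] at hD₁3
  rw [hD₁nil] at hw₁len
  simp only [List.length_nil, Nat.add_zero] at hw₁len
  have hkj₁ : k ≤ j₁ := by
    have h5 : k * ρ.length ≤ j₁ * ρ.length := by omega
    exact Nat.le_of_mul_le_mul_right h5 hρpos
  have hx₁pw : x₁ = pw ρ (j₁ - k) := by
    have h5 : x₁ ++ pw ρ k = pw ρ (j₁ - k) ++ pw ρ k := by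
      rw [← pw_add, show j₁ - k + k = j₁ by omega, ← hD₁3, hvρ]
    exact List.append_cancel_right h5
  have hcc : 1 ≤ j₁ - k := by
    rcases Nat.eq_zero_or_pos (j₁ - k) with h | h
    · rw [h, pw_zero] at hx₁pw; exact absurd hx₁pw hx₁ne
    · exact h
  have hxw : x = (x₁ ++ v) ++ u := by rw [List.append_assoc]; exact hx₁.symm
  have hj₁N : j₁ ≤ x.length * k := by
    have h6 : x.length ≤ (x.length * k) * ρ.length := by
      have := hxρ.length_le
      simpa using this
    have h7 : j₁ * ρ.length ≤ (x.length * k) * ρ.length := by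
      have h8 := congrArg List.length hxw
      simp at h8
      omega
    exact Nat.le_of_mul_le_mul_right h7 hρpos
  have hupref : u <+: pw ρ (x.length * k - j₁) := by
    have h5 : (x₁ ++ v) ++ u <+: pw ρ (x.length * k) := by rw [← hxw]; exact hxρ
    rw [hD₁3] at h5
    have h7 : pw ρ (x.length * k) = pw ρ j₁ ++ pw ρ (x.length * k - j₁) := by
      rw [← pw_add]; congr 1; omega
    rw [h7] at h5
    exact (List.prefix_append_right_inj (pw ρ j₁)).mp h5
  obtain ⟨m, P, hP1, hP2, hP3⟩ := pref_pw_decomp hρ _ u hupref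
  by_cases hP0 : P = []
  · rw [hP0, List.append_nil] at hP3
    rw [hP3, hvρ, ← pw_add, ← pw_add, Nat.add_comm]
  · have hr : 0 < P.length := List.length_pos_iff.mpr hP0
    have hPtake : P = ρ.take P.length := List.prefix_iff_eq_take.mp hP1
    exfalso
    have hu' : u = pw ρ m ++ ρ.take P.length := by
      conv_rhs => rw [← hPtake]
      exact hP3
    have hsufK : pw ρ (j₁ - k) <:+ l.flatten ++ u := by
      rw [hlp, ← hx₁pw]
      exact ⟨z, hx₁p⟩
    exact kernel hprim hρ hr hP2 hu' hvρ hk hcc l hl hsufK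
end

section
/- Let X be a set of words that is a code (i.e., the submonoid it generates is free with basis X; equivalently, concatenation from lists over X is injective). Let w₁, w₂ be lists over X and z a word not in the submonoid generated by X, with z · concat w₁ = concat w₂ · z. Then for every n and every prefix v₁ of w₁^n and prefix v₂ of w₂^n (as lists), z · concat v₁ ≠ concat v₂. -/
lemma mem_wpow {α : Type*} {u : List α} {n : ℕ} {a : α} (h : a ∈ wpow u n) : a ∈ u := by
  unfold wpow at h
  rcases List.mem_flatten.1 h with ⟨l, hl, ha⟩
  rwa [List.eq_of_mem_replicate hl] at ha

lemma flatten_wpow_succ {α : Type*} (u : List (List α)) (n : ℕ) :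
    (wpow u (n+1)).flatten = u.flatten ++ (wpow u n).flatten := by
  simp [wpow, List.replicate_succ]

/-- Shifted concatenations over a code never meet: if `X` is a code,
`z ∉ ⟨X⟩` and `z · concat w₁ = concat w₂ · z`, then `z · concat v₁ ≠ concat v₂`
for all prefixes `v₁` of `w₁^n` and `v₂` of `w₂^n`. -/
theorem shift_disjoint {α : Type*} (X : Set (List α))
    (hcode : ∀ l₁ l₂ : List (List α), (∀ a ∈ l₁, a ∈ X) → (∀ a ∈ l₂, a ∈ X) →
      l₁.flatten = l₂.flatten → l₁ = l₂)
    (w₁ w₂ : List (List α)) (hw₁ : ∀ a ∈ w₁, a ∈ X) (hw₂ : ∀ a ∈ w₂, a ∈ X)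
    (z : List α) (hz : ¬ ∃ l : List (List α), (∀ a ∈ l, a ∈ X) ∧ l.flatten = z)
    (heq : z ++ w₁.flatten = w₂.flatten ++ z)
    (n : ℕ) (v₁ v₂ : List (List α))
    (hv₁ : v₁ <+: wpow w₁ n) (hv₂ : v₂ <+: wpow w₂ n) :
    z ++ v₁.flatten ≠ v₂.flatten := by
  intro habs
  -- z is nonempty, otherwise z ∈ ⟨X⟩ via the empty list
  have hzne : z ≠ [] := by
    rintro rfl
    exact hz ⟨[], by simp, rfl⟩
  -- the shift identity for powers
  have hpow : ∀ k : ℕ, z ++ (wpow w₁ k).flatten = (wpow w₂ k).flatten ++ z := by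
    intro k
    induction k with
    | zero => simp [wpow]
    | succ k ih =>
        rw [flatten_wpow_succ, flatten_wpow_succ, ← List.append_assoc, heq,
          List.append_assoc, ih, List.append_assoc]
  obtain ⟨r₁, hr₁⟩ := hv₁
  obtain ⟨r₂, hr₂⟩ := hv₂
  -- memberships
  have hmem₁ : ∀ a ∈ wpow w₁ n, a ∈ X := fun a ha => hw₁ a (mem_wpow ha)
  have hmem₂ : ∀ a ∈ wpow w₂ n, a ∈ X := fun a ha => hw₂ a (mem_wpow ha)
  have hv₁X : ∀ a ∈ v₁, a ∈ X := fun a ha => hmem₁ a (hr₁ ▸ List.mem_append_left _ ha)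
  have hr₁X : ∀ a ∈ r₁, a ∈ X := fun a ha => hmem₁ a (hr₁ ▸ List.mem_append_right _ ha)
  have hv₂X : ∀ a ∈ v₂, a ∈ X := fun a ha => hmem₂ a (hr₂ ▸ List.mem_append_left _ ha)
  have hr₂X : ∀ a ∈ r₂, a ∈ X := fun a ha => hmem₂ a (hr₂ ▸ List.mem_append_right _ ha)
  -- derive r₁.flatten = r₂.flatten ++ z
  have key : r₁.flatten = r₂.flatten ++ z := by
    have h1 : z ++ (v₁.flatten ++ r₁.flatten) = (v₂.flatten ++ r₂.flatten) ++ z := by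
      rw [← List.flatten_append, ← List.flatten_append, hr₁, hr₂]; exact hpow n
    rw [← List.append_assoc, habs, List.append_assoc] at h1
    exact (List.append_cancel_left h1)
  -- two factorizations of the same word
  have hflat : (r₁ ++ v₁).flatten = (r₂ ++ v₂).flatten := by
    rw [List.flatten_append, List.flatten_append, key, ← habs, List.append_assoc]
  have hlist : r₁ ++ v₁ = r₂ ++ v₂ := by
    refine hcode _ _ ?_ ?_ hflat
    · intro a ha; rcases List.mem_append.1 ha with h | h
      exacts [hr₁X a h, hv₁X a h]
    · intro a ha; rcases List.mem_append.1 ha with h | h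
      exacts [hr₂X a h, hv₂X a h]
  -- compare the prefixes r₁ and r₂
  have hp₁ : r₁ <+: r₂ ++ v₂ := hlist ▸ ⟨v₁, rfl⟩
  have hp₂ : r₂ <+: r₂ ++ v₂ := ⟨v₂, rfl⟩
  rcases List.prefix_or_prefix_of_prefix hp₁ hp₂ with h | h
  · -- r₁ <+: r₂ is impossible by lengths
    have hlen : r₁.flatten.length ≤ r₂.flatten.length := by
      obtain ⟨t, rfl⟩ := h
      simp
    rw [key] at hlen
    simp only [List.length_append] at hlen
    have : z.length = 0 := by omega
    exact hzne (List.eq_nil_of_length_eq_zero this)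
  · -- r₂ <+: r₁ : the remainder flattens to z
    obtain ⟨t, rfl⟩ := h
    refine hz ⟨t, fun a ha => hr₁X a (List.mem_append_right _ ha), ?_⟩
    rw [List.flatten_append] at key
    exact List.append_cancel_left key
end

section
/- Let x, y be words of equal length with x·y ≠ y·x. Suppose p·(x·y)·s = concat v for some list v over {x,y} with p a strict prefix of the first entry of v and s a strict suffix of the last entry of v (a nontrivial {x,y}-interpretation of x·y). Then v = [x,y,x] or v = [y,x,y], and in either case x·y is imprimitive. -/
namespace UniformSquareInterp
variable {α : Type*}

variable {α : Type*}

@[simp] lemma wpow_zero (u : List α) : wpow u 0 = [] := rfl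

@[simp] lemma wpow_succ (u : List α) (n : ℕ) : wpow u (n+1) = u ++ wpow u n := by
  simp [wpow, List.replicate_succ]

lemma wpow_add (u : List α) (i j : ℕ) : wpow u (i+j) = wpow u i ++ wpow u j := by
  induction i with
  | zero => simp
  | succ k ih => rw [Nat.succ_add, wpow_succ, ih, wpow_succ, List.append_assoc]

@[simp] lemma wpow_length (u : List α) (k : ℕ) : (wpow u k).length = k * u.length := by
  induction k with
  | zero => simp
  | succ k ih => rw [wpow_succ]; simp [ih, Nat.succ_mul]; ring

lemma wpow_comm (u : List α) (i j : ℕ) : wpow u i ++ wpow u j = wpow u j ++ wpow u i := by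
  rw [← wpow_add, ← wpow_add, Nat.add_comm]

lemma wpow_mul (u : List α) (i j : ℕ) : wpow (wpow u i) j = wpow u (i*j) := by
  induction j with
  | zero => simp
  | succ k ih => rw [wpow_succ, ih, Nat.mul_succ, Nat.add_comm, wpow_add]

lemma wpow_one (u : List α) : wpow u 1 = u := by simp

lemma pos_of_wpow_ne_nil {u z : List α} {i : ℕ} (h : u = wpow z i) (hu : u ≠ []) : 1 ≤ i := by
  rcases i with _ | i
  · simp at h; exact absurd h hu
  · omega

/-- Commuting words are powers of a common word. -/
lemma comm_words : ∀ (N : ℕ) (a b : List α), a.length + b.length ≤ N → a ++ b = b ++ a →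
    ∃ z i j, a = wpow z i ∧ b = wpow z j := by
  intro N
  induction N with
  | zero =>
    intro a b hlen _
    have ha : a = [] := by simpa using List.length_eq_zero_iff.mp (by omega)
    have hb : b = [] := by simpa using List.length_eq_zero_iff.mp (by omega)
    exact ⟨[], 0, 0, by simp [ha], by simp [hb]⟩
  | succ N ih =>
    intro a b hlen hcomm
    rcases eq_or_ne a [] with ha | ha
    · exact ⟨b, 0, 1, by simp [ha], by simp⟩
    rcases eq_or_ne b [] with hb | hb
    · exact ⟨a, 1, 0, by simp, by simp [hb]⟩
    rcases le_total a.length b.length with hab | hab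
    · have hpre : a <+: b := by
        have h1 : a <+: b ++ a := hcomm ▸ a.prefix_append b
        exact List.prefix_of_prefix_length_le h1 (b.prefix_append a) hab
      obtain ⟨b', rfl⟩ := hpre
      have hcomm' : a ++ b' = b' ++ a := by
        have := hcomm
        rw [← List.append_assoc] at this
        have h2 : a ++ (a ++ b') = a ++ (b' ++ a) := by
          rw [← List.append_assoc, ← List.append_assoc]
          exact this
        exact List.append_cancel_left h2
      have hN : a.length + b'.length ≤ N := by
        have h1 : 1 ≤ a.length := by
          cases a with
          | nil => exact absurd rfl ha
          | cons h t => simp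
        simp [List.length_append] at hlen; omega
      obtain ⟨z, i, j, h1, h2⟩ := ih a b' hN hcomm'
      exact ⟨z, i, i + j, h1, by rw [wpow_add, h1, h2]⟩
    · have hpre : b <+: a := by
        have h1 : b <+: a ++ b := hcomm.symm ▸ b.prefix_append a
        exact List.prefix_of_prefix_length_le h1 (a.prefix_append b) hab
      obtain ⟨a', rfl⟩ := hpre
      have hcomm' : b ++ a' = a' ++ b := by
        have h2 : b ++ (a' ++ b) = b ++ (b ++ a') := by
          rw [← List.append_assoc]; exact hcomm
        exact (List.append_cancel_left h2).symm
      have hN : b.length + a'.length ≤ N := by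
        have h1 : 1 ≤ b.length := by
          cases b with
          | nil => exact absurd rfl hb
          | cons h t => simp
        simp [List.length_append] at hlen; omega
      obtain ⟨z, i, j, h1, h2⟩ := ih b a' hN hcomm'
      exact ⟨z, i + j, i, by rw [wpow_add, h1, h2], h1⟩

variable {α : Type*}


@[simp] lemma wpow_nil (k : ℕ) : wpow ([] : List α) k = [] := by
  induction k with
  | zero => simp
  | succ k ih => rw [wpow_succ]; simpa using ih

/-- pump: if `w <+: t ++ w` then `w <+: wpow t K` once `K*|t|` covers `|w|`. -/
lemma prefix_wpow_of_prefix (K : ℕ) : ∀ (w t : List α), w <+: t ++ w → w.length ≤ K * t.length →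
    w <+: wpow t K := by
  induction K with
  | zero =>
    intro w t _ hlen
    have : w = [] := List.length_eq_zero_iff.mp (by omega)
    simp [this]
  | succ K ih =>
    intro w t hpre hlen
    rcases le_or_gt w.length t.length with hle | hlt
    · have h1 : w <+: t := by
        refine List.prefix_of_prefix_length_le hpre (t.prefix_append w) hle
      exact h1.trans (by rw [wpow_succ]; exact t.prefix_append _)
    · have ht : t <+: w := by
        refine List.prefix_of_prefix_length_le (t.prefix_append w) hpre hlt.le
      obtain ⟨w', rfl⟩ := ht
      have hpre' : w' <+: t ++ w' := by
        rw [← List.prefix_append_right_inj t]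
        exact hpre
      have hlen' : w'.length ≤ K * t.length := by
        simp [List.length_append, Nat.succ_mul] at hlen ⊢; omega
      have := ih w' t hpre' hlen'
      rw [wpow_succ]
      exact (List.prefix_append_right_inj t).mpr this

/-- a prefix of a power whose length is a multiple of `|z|` is itself a power. -/
lemma eq_wpow_of_prefix_wpow : ∀ (l : ℕ) (w z : List α) (K : ℕ), w <+: wpow z K →
    w.length = l * z.length → w = wpow z l := by
  intro l
  induction l with
  | zero =>
    intro w z K _ hlen
    simpa using List.length_eq_zero_iff.mp (by omega)
  | succ l ih =>
    intro w z K hpre hlen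
    rcases eq_or_ne z [] with rfl | hz
    · have hw : w = [] := List.length_eq_zero_iff.mp (by simpa using hlen)
      simp [hw, wpow_nil]
    · have hzlen : 1 ≤ z.length := by
        cases z with | nil => exact absurd rfl hz | cons a t => simp
      have hK : K ≠ 0 := by
        rintro rfl
        have h0 := hpre.length_le
        simp [hlen] at h0
        exact hz h0
      obtain ⟨K, rfl⟩ := Nat.exists_eq_succ_of_ne_zero hK
      rw [wpow_succ] at hpre
      have hzw : z <+: w := by
        refine List.prefix_of_prefix_length_le (z.prefix_append _) hpre ?_
        rw [hlen]; exact Nat.le_mul_of_pos_left _ (Nat.succ_pos l)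
      obtain ⟨w', rfl⟩ := hzw
      have hpre' : w' <+: wpow z K := (List.prefix_append_right_inj z).mp hpre
      have hlen' : w'.length = l * z.length := by
        simp [List.length_append, Nat.succ_mul] at hlen ⊢; omega
      rw [wpow_succ, ih w' z K hpre' hlen']

/-- from prefix of a power, get the one-step period relation. -/
lemma wpow_prefix_cons (t : List α) (K : ℕ) : wpow t K <+: t ++ wpow t K := by
  induction K with
  | zero => simp
  | succ K ih =>
    rw [wpow_succ]
    exact (List.prefix_append_right_inj t).mpr ih

lemma prefix_cons_of_prefix_wpow {w t : List α} {K : ℕ} (h : w <+: wpow t K) : w <+: t ++ w := by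
  have h2 : wpow t K <+: t ++ wpow t K := wpow_prefix_cons t K
  have h3 : w <+: t ++ wpow t K := h.trans h2
  -- w is a prefix of t ++ wpow t K; and t ++ w is a prefix of t ++ wpow t K; lengths
  have h4 : t ++ w <+: t ++ wpow t K := (List.prefix_append_right_inj t).mpr h
  exact List.prefix_of_prefix_length_le h3 h4 (by simp)


lemma wpow_two (u : List α) : wpow u 2 = u ++ u := by
  rw [show (2:ℕ) = 1 + 1 from rfl, wpow_add, wpow_one]

variable {α : Type*}




variable {α : Type*}

lemma tad (w r : List α) (d : ℕ) : w.take d ++ (w.drop d ++ r) = w ++ r := by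
  rw [← List.append_assoc, List.take_append_drop]

/-- Splitting the length-3n word equation into three blocks of length n. -/
lemma seg3 {x y p s a b c : List α} (hy : y.length = x.length) (ha : a.length = x.length)
    (hb : b.length = x.length) (hc : c.length = x.length)
    (hps : p.length + s.length = x.length)
    (heq : p ++ x ++ y ++ s = a ++ b ++ c) :
    p ++ x.take s.length = a ∧ x.drop s.length ++ y.take s.length = b ∧
      y.drop s.length ++ s = c := by
  set d := s.length with hd
  have e1 : (p ++ x.take d) ++ ((x.drop d ++ y.take d) ++ (y.drop d ++ s))
      = a ++ (b ++ c) := by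
    calc (p ++ x.take d) ++ ((x.drop d ++ y.take d) ++ (y.drop d ++ s))
        = p ++ (x.take d ++ (x.drop d ++ (y.take d ++ (y.drop d ++ s)))) := by
          simp [List.append_assoc]
      _ = p ++ (x ++ (y.take d ++ (y.drop d ++ s))) := by rw [tad]
      _ = p ++ (x ++ (y ++ s)) := by rw [tad]
      _ = a ++ (b ++ c) := by simpa [List.append_assoc] using heq
  obtain ⟨h1, h23⟩ := List.append_inj e1 (by simp [List.length_take]; omega)
  obtain ⟨h2, h3⟩ := List.append_inj h23
    (by simp [List.length_take, List.length_drop]; omega)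
  exact ⟨h1, h2, h3⟩

/-- Split an equation `u ++ v = w` with `|u| = m` into take/drop components. -/
lemma split_td {u v w : List α} {m : ℕ} (h : u ++ v = w) (hu : u.length = m) :
    u = w.take m ∧ v = w.drop m := by
  subst h
  constructor
  · rw [List.take_append]
    simp [hu]
  · rw [List.drop_append]
    simp [hu]

lemma core1 {x y p s : List α} (hy : y.length = x.length)
    (hps : p.length + s.length = x.length)
    (heq : p ++ x ++ y ++ s = x ++ x ++ x) : x = y := by
  obtain ⟨S1, S2, S3⟩ := seg3 hy rfl rfl rfl hps heq
  set d := s.length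
  set m := p.length with hm
  obtain ⟨_, e1⟩ := split_td S1 rfl
  obtain ⟨e2, e3⟩ := split_td (m := m) S2 (by simp [List.length_drop]; omega)
  obtain ⟨e4, _⟩ := split_td (m := m) S3 (by simp [List.length_drop, hy]; omega)
  have hx : x = x.drop m ++ x.take m := by
    conv_lhs => rw [← List.take_append_drop d x]
    rw [e1, e2]
  have hy2 : y = x.drop m ++ x.take m := by
    conv_lhs => rw [← List.take_append_drop d y]
    rw [e3, e4]
  exact hx.trans hy2.symm

lemma core8 {x y p s : List α} (hy : y.length = x.length)
    (hps : p.length + s.length = x.length)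
    (heq : p ++ x ++ y ++ s = y ++ y ++ y) : x = y := by
  obtain ⟨S1, S2, S3⟩ := seg3 hy hy hy hy hps heq
  set d := s.length
  set m := p.length with hm
  obtain ⟨_, e1⟩ := split_td (m := m) S1 rfl
  obtain ⟨e2, e3⟩ := split_td (m := m) S2 (by simp [List.length_drop]; omega)
  obtain ⟨e4, _⟩ := split_td (m := m) S3 (by simp [List.length_drop, hy]; omega)
  have hx : x = y.drop m ++ y.take m := by
    conv_lhs => rw [← List.take_append_drop d x]
    rw [e1, e2]
  have hy2 : y = y.drop m ++ y.take m := by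
    conv_lhs => rw [← List.take_append_drop d y]
    rw [e3, e4]
  exact hx.trans hy2.symm

lemma imprim_of_rot {u w q : List α} (hw : w ≠ []) (hq : q ≠ []) (h1 : u = w ++ q)
    (h2 : u = q ++ w) : Imprim u := by
  obtain ⟨z, i, j, hwz, hqz⟩ := comm_words (w.length + q.length) w q le_rfl
    (h1.symm.trans h2)
  have hi : 1 ≤ i := pos_of_wpow_ne_nil hwz hw
  have hj : 1 ≤ j := pos_of_wpow_ne_nil hqz hq
  exact ⟨z, i + j, by omega, by rw [h1, wpow_add, hwz, hqz]⟩
variable {α : Type*}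
lemma coreC {x y p s : List α} (hy : y.length = x.length) (hm1 : 1 ≤ p.length)
    (hd1 : 1 ≤ s.length) (hps : p.length + s.length = x.length)
    (heq : p ++ x ++ y ++ s = x ++ y ++ x) : Imprim (x ++ y) := by
  obtain ⟨S1, S2, S3⟩ := seg3 hy rfl hy rfl hps heq
  set d := s.length
  set m := p.length with hm
  obtain ⟨_, e1⟩ := split_td S1 rfl                -- x.take d = x.drop m
  obtain ⟨e2, e3⟩ := split_td (m := m) S2 (by simp [List.length_drop]; omega)
    -- x.drop d = y.take m, y.take d = y.drop m
  obtain ⟨e4, _⟩ := split_td (m := m) S3 (by simp [List.length_drop, hy]; omega)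
    -- y.drop d = x.take m
  have key : y.drop m ++ x.take m = y := by
    conv_rhs => rw [← List.take_append_drop d y]
    rw [e3, e4]
  have h2 : (x.drop m ++ y) ++ x.take m = x ++ y := by
    have : y ++ x.take m = x.drop d ++ y := by
      conv_lhs => rw [← List.take_append_drop m y]
      rw [e2, List.append_assoc, key]
    rw [List.append_assoc, this, ← e1, ← List.append_assoc, List.take_append_drop]
  have h1 : x ++ y = x.take m ++ (x.drop m ++ y) := by
    rw [← List.append_assoc, List.take_append_drop]
  have wne : x.take m ≠ [] := by
    apply List.ne_nil_of_length_pos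
    simp [List.length_take]
    omega
  have qne : x.drop m ++ y ≠ [] := by
    apply List.ne_nil_of_length_pos
    simp [List.length_append]
    omega
  exact imprim_of_rot wne qne h1 h2.symm

lemma coreD {x y p s : List α} (hy : y.length = x.length) (hm1 : 1 ≤ p.length)
    (hd1 : 1 ≤ s.length) (hps : p.length + s.length = x.length)
    (heq : p ++ x ++ y ++ s = y ++ x ++ y) : Imprim (x ++ y) := by
  obtain ⟨S1, S2, S3⟩ := seg3 hy hy rfl hy hps heq
  set d := s.length
  set m := p.length with hm
  obtain ⟨_, e1⟩ := split_td S1 rfl                -- x.take d = y.drop m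
  obtain ⟨e2, e3⟩ := split_td (m := m) S2 (by simp [List.length_drop]; omega)
    -- x.drop d = x.take m, y.take d = x.drop m
  obtain ⟨e4, _⟩ := split_td (m := m) S3 (by simp [List.length_drop, hy]; omega)
    -- y.drop d = y.take m
  -- key : x.drop m ++ y.take m = y
  have key : x.drop m ++ y.take m = y := by
    conv_rhs => rw [← List.take_append_drop d y]
    rw [e3, e4]
  -- hx : x = y.drop m ++ x.take m
  have hx : x = y.drop m ++ x.take m := by
    conv_lhs => rw [← List.take_append_drop d x]
    rw [e1, e2]
  -- h1 : u = A ++ W  where A = y.drop m, W = x ++ y.take m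
  have h1 : x ++ y = y.drop m ++ (x ++ y.take m) := by
    calc x ++ y = x ++ (x.drop m ++ y.take m) := by rw [key]
      _ = (x ++ x.drop m) ++ y.take m := by rw [List.append_assoc]
      _ = ((y.drop m ++ x.take m) ++ x.drop m) ++ y.take m := by rw [← hx]
      _ = y.drop m ++ ((x.take m ++ x.drop m) ++ y.take m) := by
            simp [List.append_assoc]
      _ = y.drop m ++ (x ++ y.take m) := by rw [List.take_append_drop]
  have h2 : x ++ y = (x ++ y.take m) ++ y.drop m := by
    rw [List.append_assoc, List.take_append_drop]
  have wne : y.drop m ≠ [] := by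
    apply List.ne_nil_of_length_pos
    simp [List.length_drop, hy]
    omega
  have qne : x ++ y.take m ≠ [] := by
    apply List.ne_nil_of_length_pos
    simp [List.length_append]
    omega
  exact imprim_of_rot wne qne h1 h2
variable {α : Type*}
/-- Case `v = [x,x,y]` leads to `x = y`. -/
lemma coreA {x y p s : List α} (hy : y.length = x.length) (hm1 : 1 ≤ p.length)
    (hd1 : 1 ≤ s.length) (hps : p.length + s.length = x.length)
    (heq : p ++ x ++ y ++ s = x ++ x ++ y) : x = y := by
  obtain ⟨S1, S2, S3⟩ := seg3 hy rfl rfl hy hps heq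
  set d := s.length
  set m := p.length with hm
  obtain ⟨_, e1⟩ := split_td S1 rfl                -- x.take d = x.drop m
  obtain ⟨e2, e3⟩ := split_td (m := m) S2 (by simp [List.length_drop]; omega)
    -- x.drop d = x.take m, y.take d = x.drop m
  obtain ⟨e4, _⟩ := split_td (m := m) S3 (by simp [List.length_drop, hy]; omega)
    -- y.drop d = y.take m
  have hxTR : x = x.drop m ++ x.take m := by
    conv_lhs => rw [← List.take_append_drop d x]
    rw [e1, e2]
  have hcomm : x.take m ++ x.drop m = x.drop m ++ x.take m := by
    rw [List.take_append_drop]; exact hxTR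
  obtain ⟨z, i, j, hR, hT⟩ := comm_words ((x.take m).length + (x.drop m).length)
    (x.take m) (x.drop m) le_rfl hcomm
  have hRlen : (x.take m).length = m := by simp [List.length_take]; omega
  have hTlen : (x.drop m).length = x.length - m := by simp [List.length_drop]
  have hi : 1 ≤ i := pos_of_wpow_ne_nil hR
    (by apply List.ne_nil_of_length_pos; omega)
  have hj : 1 ≤ j := pos_of_wpow_ne_nil hT
    (by apply List.ne_nil_of_length_pos; omega)
  have hxw : x = wpow z (i + j) := by
    rw [wpow_add, ← hR, ← hT, List.take_append_drop]
  have hnlen : x.length = (i + j) * z.length := by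
    rw [hxw, wpow_length]
  -- y = T ++ y.take m, hence y <+: T ++ y
  have hy2 : y = x.drop m ++ y.take m := by
    conv_lhs => rw [← List.take_append_drop d y]
    rw [e3, e4]
  have hypre : y <+: x.drop m ++ y := by
    conv_lhs => rw [hy2]
    exact (List.prefix_append_right_inj _).mpr (List.take_prefix _ _)
  have hyp2 : y <+: wpow (x.drop m) y.length := by
    refine prefix_wpow_of_prefix _ _ _ hypre ?_
    have : 1 ≤ (x.drop m).length := by omega
    calc y.length = y.length * 1 := by omega
      _ ≤ y.length * (x.drop m).length := Nat.mul_le_mul_left _ this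
  rw [hT, wpow_mul] at hyp2
  have : y = wpow z (i + j) :=
    eq_wpow_of_prefix_wpow _ _ _ _ hyp2 (by rw [hy]; exact hnlen)
  rw [hxw, this]

/-- Case `v = [y,y,x]` leads to `x = y`. -/
lemma coreB {x y p s : List α} (hy : y.length = x.length) (hm1 : 1 ≤ p.length)
    (hd1 : 1 ≤ s.length) (hps : p.length + s.length = x.length)
    (heq : p ++ x ++ y ++ s = y ++ y ++ x) : x = y := by
  obtain ⟨S1, S2, S3⟩ := seg3 hy hy hy rfl hps heq
  set d := s.length
  set m := p.length with hm
  obtain ⟨_, e1⟩ := split_td S1 rfl                -- x.take d = y.drop m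
  obtain ⟨e2, e3⟩ := split_td (m := m) S2 (by simp [List.length_drop]; omega)
    -- x.drop d = y.take m, y.take d = y.drop m
  obtain ⟨e4, _⟩ := split_td (m := m) S3 (by simp [List.length_drop, hy]; omega)
    -- y.drop d = x.take m
  have hxBA : x = y.drop m ++ y.take m := by
    conv_lhs => rw [← List.take_append_drop d x]
    rw [e1, e2]
  -- F3 : y.take d = y.drop m ; F4 : y.drop d = x.take m
  rcases le_or_gt m d with hmd | hdm
  · -- easy subcase : x.take m = y.take m  and  y.drop d = x.take m gives x = y
    have h0 : (y.take d).length = d := by simp [List.length_take, hy]; omega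
    have hxtake : x.take m = y.take m := by
      conv_lhs => rw [hxBA]
      rw [← e3, List.take_append, List.take_take, h0,
        Nat.sub_eq_zero_of_le hmd]
      simp [inf_eq_left.mpr hmd]
    have hy2 : y = y.drop m ++ y.take m := by
      conv_lhs => rw [← List.take_append_drop d y]
      rw [e3, e4, hxtake]
    exact hxBA.trans hy2.symm
  · -- hard subcase : d < m
    set A := y.take m with hA_def
    set Pd := y.take d with hPd_def
    have hAlen : A.length = m := by simp [hA_def, List.length_take, hy]; omega
    have hPdlen : Pd.length = d := by simp [hPd_def, List.length_take, hy]; omega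
    have hAtake : A.take d = Pd := by
      rw [hA_def, hPd_def, List.take_take, inf_eq_left.mpr hdm.le]
    have hA : A = Pd ++ A.drop d := by
      conv_lhs => rw [← List.take_append_drop d A]
      rw [hAtake]
    have hxPA : x = Pd ++ A := by rw [hxBA, ← e3]
    have hyAP : y = A ++ Pd := by
      conv_lhs => rw [← List.take_append_drop m y]
      rw [← e3]
    -- C : Pd ++ A.take (m - d) = A.drop d ++ Pd
    have hCl : x.take m = Pd ++ A.take (m - d) := by
      rw [hxPA, List.take_append, hPdlen,
        List.take_of_length_le (by omega)]
    have hCr : y.drop d = A.drop d ++ Pd := by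
      conv_lhs => rw [← List.take_append_drop m y, ← e3]
      rw [List.drop_append, hAlen,
        Nat.sub_eq_zero_of_le hdm.le, List.drop_zero]
    have hC : Pd ++ A.take (m - d) = A.drop d ++ Pd := by
      rw [← hCl, ← hCr, e4]
    -- A ++ Pd = (Pd ++ Pd) ++ A.take (m - d)
    have hAP : A ++ Pd = (Pd ++ Pd) ++ A.take (m - d) := by
      calc A ++ Pd = (Pd ++ A.drop d) ++ Pd := by rw [← hA]
        _ = Pd ++ (A.drop d ++ Pd) := by rw [List.append_assoc]
        _ = Pd ++ (Pd ++ A.take (m - d)) := by rw [← hC]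
        _ = (Pd ++ Pd) ++ A.take (m - d) := by rw [List.append_assoc]
    have hpre : A <+: (Pd ++ Pd) ++ A := by
      have h1 : A <+: A ++ Pd := A.prefix_append Pd
      rw [hAP] at h1
      exact h1.trans ((List.prefix_append_right_inj _).mpr (List.take_prefix _ _))
    have hpw : A <+: wpow Pd (2 * m) := by
      have h2 := prefix_wpow_of_prefix m A (Pd ++ Pd) hpre
        (by rw [hAlen, List.length_append, hPdlen]
            calc m = m * 1 := by omega
              _ ≤ m * (d + d) := Nat.mul_le_mul_left _ (by omega))
      rwa [← wpow_two, wpow_mul] at h2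
    have hApre : A <+: Pd ++ A := prefix_cons_of_prefix_wpow hpw
    have hA2 : A = Pd ++ A.take (m - d) := by
      have h3 : A = (Pd ++ A).take m := by
        have := List.prefix_iff_eq_take.mp hApre
        rwa [hAlen] at this
      conv_lhs => rw [h3]
      rw [List.take_append, hPdlen,
        List.take_of_length_le (by omega)]
    have hE : A.drop d = A.take (m - d) := List.append_cancel_left (hA.symm.trans hA2)
    rw [hE] at hC
    obtain ⟨z, i, j, hPz, hEz⟩ := comm_words (Pd.length + (A.take (m-d)).length)
      Pd (A.take (m - d)) le_rfl hC
    have hx' : x = wpow z (i + (i + j)) := by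
      rw [hxPA, hA2, hPz, hEz, wpow_add, wpow_add]
    have hy' : y = wpow z ((i + j) + i) := by
      rw [hyAP, hA2, hPz, hEz, wpow_add, wpow_add]
    rw [hx', hy']
    congr 1
    omega
end UniformSquareInterp

/-- A nontrivial `{x,y}`-interpretation of `x·y` for words of equal length:
necessarily `v = [x,y,x]` or `v = [y,x,y]`, and `x·y` is imprimitive. -/
theorem uniform_square_interp {α : Type*} (x y p s : List α) (v : List (List α))
    (hlen : x.length = y.length) (hcomm : x ++ y ≠ y ++ x)
    (hv : ∀ a ∈ v, a = x ∨ a = y) (hvne : v ≠ [])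
    (heq : p ++ (x ++ y) ++ s = v.flatten)
    (hp : p <+: v.headI ∧ p ≠ v.headI)
    (hs : s <:+ v.getLastD [] ∧ s ≠ v.getLastD [])
    (hnontriv : ¬ (p = [] ∧ s = [])) :
    (v = [x, y, x] ∨ v = [y, x, y]) ∧ Imprim (x ++ y) := by
  classical
  have hn1 : 1 ≤ x.length := by
    rcases Nat.eq_zero_or_pos x.length with h0 | h; swap
    · exact h
    · exfalso
      have hx0 : x = [] := List.length_eq_zero_iff.mp h0
      have hy0 : y = [] := List.length_eq_zero_iff.mp (by omega)
      exact hcomm (by rw [hx0, hy0])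
  have hvlen : ∀ a ∈ v, a.length = x.length := by
    intro a ha; rcases hv a ha with rfl | rfl
    · rfl
    · exact hlen.symm
  have hflat : v.flatten.length = v.length * x.length := by
    rw [List.length_flatten]
    have h1 : ∀ L ∈ v.map List.length, L = x.length := by
      intro L hL
      obtain ⟨w, hw, rfl⟩ := List.mem_map.mp hL
      exact hvlen w hw
    rw [List.sum_eq_card_nsmul _ x.length h1]
    simp [List.length_map]
  have hheadlen : v.headI.length = x.length := by
    apply hvlen
    rcases v with _ | ⟨a, t⟩
    · exact absurd rfl hvne
    · simp
  have hlastlen : (v.getLastD []).length = x.length := by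
    apply hvlen
    rcases v with _ | ⟨a, t⟩
    · exact absurd rfl hvne
    · rw [List.getLastD_cons]; exact List.getLastD_mem_cons
  have hplt : p.length < x.length := by
    have h1 := hp.1.length_le
    rw [hheadlen] at h1
    rcases lt_or_eq_of_le h1 with h | h
    · exact h
    · exact absurd (hp.1.eq_of_length (by rw [h, hheadlen])) hp.2
  have hslt : s.length < x.length := by
    have h1 := hs.1.length_le
    rw [hlastlen] at h1
    rcases lt_or_eq_of_le h1 with h | h
    · exact h
    · exact absurd (hs.1.eq_of_length (by rw [h, hlastlen])) hs.2
  have hlen_eq : p.length + (x.length + (y.length + s.length)) = v.length * x.length := by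
    have h2 := congrArg List.length heq
    simpa [List.length_append, hflat] using h2
  have hk4 : v.length < 4 := by
    by_contra h
    push_neg at h
    have h3 : 4 * x.length ≤ v.length * x.length := Nat.mul_le_mul_right x.length h
    omega
  have hk2 : 2 ≤ v.length := by
    by_contra h
    push_neg at h
    have h3 : v.length * x.length ≤ 1 * x.length :=
      Nat.mul_le_mul_right x.length (by omega)
    omega
  have hk3 : v.length = 3 := by
    rcases (by omega : v.length = 2 ∨ v.length = 3) with h | h
    · exfalso
      rw [h] at hlen_eq
      exact hnontriv ⟨List.length_eq_zero_iff.mp (by omega), List.length_eq_zero_iff.mp (by omega)⟩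
    · exact h
  obtain ⟨a, b, c, rfl⟩ := List.length_eq_three.mp hk3
  simp only [List.length_cons, List.length_nil] at hlen_eq
  have hps : p.length + s.length = x.length := by omega
  have hm1 : 1 ≤ p.length := by omega
  have hd1 : 1 ≤ s.length := by omega
  have heq3 : p ++ x ++ y ++ s = a ++ b ++ c := by
    simpa [List.append_assoc] using heq
  have hcomm' : x = y → False := fun h => hcomm (by rw [h])
  have hyx : y.length = x.length := hlen.symm
  have hrevlen : x.reverse.length = y.reverse.length := by simp [hlen]
  rcases hv a (by simp) with ha | ha <;> rcases hv b (by simp) with hb | hb <;>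
      rcases hv c (by simp) with hc | hc <;> subst a <;> subst b <;> subst c
  · exact (hcomm' (UniformSquareInterp.core1 hyx hps heq3)).elim
  · exact (hcomm' (UniformSquareInterp.coreA hyx hm1 hd1 hps heq3)).elim
  · exact ⟨Or.inl rfl, UniformSquareInterp.coreC hyx hm1 hd1 hps heq3⟩
  · -- [x, y, y] : reverse, coreA
    have hrev : s.reverse ++ y.reverse ++ x.reverse ++ p.reverse
        = y.reverse ++ y.reverse ++ x.reverse := by
      have h4 := congrArg List.reverse heq3
      simpa [List.reverse_append, List.append_assoc] using h4
    have h5 := UniformSquareInterp.coreA (x := y.reverse) (y := x.reverse)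
      (p := s.reverse) (s := p.reverse) hrevlen (by simpa using hd1)
      (by simpa using hm1) (by simp; omega) hrev
    exact (hcomm' (List.reverse_injective h5).symm).elim
  · -- [y, x, x] : reverse, coreB
    have hrev : s.reverse ++ y.reverse ++ x.reverse ++ p.reverse
        = x.reverse ++ x.reverse ++ y.reverse := by
      have h4 := congrArg List.reverse heq3
      simpa [List.reverse_append, List.append_assoc] using h4
    have h5 := UniformSquareInterp.coreB (x := y.reverse) (y := x.reverse)
      (p := s.reverse) (s := p.reverse) hrevlen (by simpa using hd1)
      (by simpa using hm1) (by simp; omega) hrev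
    exact (hcomm' (List.reverse_injective h5).symm).elim
  · exact ⟨Or.inr rfl, UniformSquareInterp.coreD hyx hm1 hd1 hps heq3⟩
  · exact (hcomm' (UniformSquareInterp.coreB hyx hm1 hd1 hps heq3)).elim
  · exact (hcomm' (UniformSquareInterp.core8 hyx hps heq3)).elim
end

section
/- Let x, y be non-commuting words and let α = longest common prefix of x·y and y·x. Let z₀ and z₁ be lists over {x,y} such that concat z₀ and concat z₁ are not prefix-comparable. Then (concat z₀) ∧ₚ (concat z₁) = concat (z₀ ∧ₚ z₁) · α, where ∧ₚ on the left and right end denotes longest common prefix of words, and z₀ ∧ₚ z₁ denotes the longest common list-prefix of z₀ and z₁. -/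
/-- Longest common prefix of two lists. -/
def lcp {β : Type*} [DecidableEq β] : List β → List β → List β
  | a :: l, b :: m => if a = b then a :: lcp l m else []
  | _, _ => []

theorem lcp_nil_left {β : Type*} [DecidableEq β] (v : List β) : lcp [] v = [] := by
  cases v <;> rfl

theorem lcp_nil_right {β : Type*} [DecidableEq β] (u : List β) : lcp u [] = [] := by
  cases u <;> rfl

theorem lcp_comm {β : Type*} [DecidableEq β] : ∀ u v : List β, lcp u v = lcp v u
  | [], v => by rw [lcp_nil_left, lcp_nil_right]
  | u, [] => by rw [lcp_nil_left, lcp_nil_right]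
  | a :: l, b :: m => by
    simp only [lcp]
    by_cases h : a = b
    · subst h; simp [lcp_comm l m]
    · rw [if_neg h, if_neg (Ne.symm h)]

theorem lcp_append {β : Type*} [DecidableEq β] :
    ∀ p s t : List β, lcp (p ++ s) (p ++ t) = p ++ lcp s t
  | [], s, t => rfl
  | a :: p, s, t => by
    simp [List.cons_append, lcp, lcp_append p s t]

theorem lcp_stable {β : Type*} [DecidableEq β] :
    ∀ p q s t : List β, ¬ p <+: q → ¬ q <+: p → lcp (p ++ s) (q ++ t) = lcp p q
  | [], q, s, t, h1, _ => absurd List.nil_prefix h1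
  | a :: p, [], s, t, _, h2 => absurd List.nil_prefix h2
  | a :: p, b :: q, s, t, h1, h2 => by
    simp only [List.cons_append, lcp, List.append_eq]
    by_cases h : a = b
    · subst h
      rw [if_pos rfl, if_pos rfl, lcp_stable p q s t
        (fun hp => h1 (List.cons_prefix_cons.mpr ⟨rfl, hp⟩))
        (fun hp => h2 (List.cons_prefix_cons.mpr ⟨rfl, hp⟩))]
    · rw [if_neg h, if_neg h]

/-- Translation: a word over `{y ++ x', y}` is a word over `{x', y}`. -/
theorem tr_exists {α : Type*} (y x' : List α) :
    ∀ z : List (List α), (∀ a ∈ z, a = y ++ x' ∨ a = y) →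
      ∃ w : List (List α), (∀ a ∈ w, a = x' ∨ a = y) ∧ w.flatten = z.flatten
  | [], _ => ⟨[], by simp⟩
  | a :: z, hz => by
    obtain ⟨w, hw, hfw⟩ := tr_exists y x' z (fun b hb => hz b (List.mem_cons_of_mem _ hb))
    rcases hz a List.mem_cons_self with ha | ha
    · refine ⟨y :: x' :: w, ?_, by simp [hfw, ha]⟩
      intro b hb
      simp only [List.mem_cons] at hb
      rcases hb with rfl | rfl | hb
      · exact Or.inr rfl
      · exact Or.inl rfl
      · exact hw b hb
    · refine ⟨y :: w, ?_, by simp [hfw, ha]⟩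
      intro b hb
      simp only [List.mem_cons] at hb
      rcases hb with rfl | hb
      · exact Or.inr rfl
      · exact hw b hb

/-- Core lemma: if the two concatenations start with distinct code letters and are
not prefix-comparable, their longest common prefix is `lcp (x++y) (y++x)`. -/
theorem lemE {α : Type*} [DecidableEq α] :
    ∀ n : ℕ, ∀ x y : List α, x.length + y.length ≤ n → x ++ y ≠ y ++ x →
    ∀ z₀ z₁ : List (List α), (∀ a ∈ z₀, a = x ∨ a = y) → (∀ a ∈ z₁, a = x ∨ a = y) →
    ¬ ((x ++ z₀.flatten) <+: (y ++ z₁.flatten) ∨ (y ++ z₁.flatten) <+: (x ++ z₀.flatten)) →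
    lcp (x ++ z₀.flatten) (y ++ z₁.flatten) = lcp (x ++ y) (y ++ x) := by
  intro n
  induction n with
  | zero =>
    intro x y hlen hcomm
    exfalso
    apply hcomm
    have hx : x = [] := List.eq_nil_of_length_eq_zero (by omega)
    have hy : y = [] := List.eq_nil_of_length_eq_zero (by omega)
    subst hx; subst hy; rfl
  | succ n IH =>
    intro x y hlen hcomm z₀ z₁ hz₀ hz₁ hnc
    by_cases hyx : y <+: x
    · -- Case B : y is a prefix of x
      obtain ⟨x', rfl⟩ := hyx
      have hy : y ≠ [] := fun h => hcomm (by simp [h])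
      have hypos : 0 < y.length := List.length_pos_iff.mpr hy
      have hlen' : x'.length + y.length ≤ n := by
        simp only [List.length_append] at hlen; omega
      have hcomm' : x' ++ y ≠ y ++ x' := by
        intro h
        apply hcomm
        rw [List.append_assoc, h, ← List.append_assoc]
      obtain ⟨w₀, hw₀, hf₀⟩ := tr_exists y x' z₀ hz₀
      rcases z₁ with _ | ⟨c, rest⟩
      · exact absurd (Or.inr ⟨x' ++ z₀.flatten, by simp⟩) hnc
      · obtain ⟨v₂, hv₂, hfv⟩ :
            ∃ v₂ : List (List α), (∀ a ∈ v₂, a = x' ∨ a = y) ∧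
              (c :: rest).flatten = y ++ v₂.flatten := by
          obtain ⟨w₁, hw₁, hf₁⟩ := tr_exists y x' rest
            (fun a ha => hz₁ a (List.mem_cons_of_mem _ ha))
          rcases hz₁ c List.mem_cons_self with ha | ha
          · refine ⟨x' :: w₁, ?_, by simp [hf₁, ha]⟩
            intro b hb
            simp only [List.mem_cons] at hb
            rcases hb with rfl | hb
            · exact Or.inl rfl
            · exact hw₁ b hb
          · exact ⟨w₁, hw₁, by simp [hf₁, ha]⟩
        have E1 : (y ++ x') ++ z₀.flatten = y ++ (x' ++ w₀.flatten) := by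
          rw [List.append_assoc, ← hf₀]
        have hnc' : ¬ ((x' ++ w₀.flatten) <+: (y ++ v₂.flatten) ∨
            (y ++ v₂.flatten) <+: (x' ++ w₀.flatten)) := by
          intro h
          apply hnc
          rcases h with h | h
          · refine Or.inl ?_
            rw [E1, hfv]
            exact (List.prefix_append_right_inj y).mpr h
          · refine Or.inr ?_
            rw [E1, hfv]
            exact (List.prefix_append_right_inj y).mpr h
        have key := IH x' y hlen' hcomm' w₀ v₂ hw₀ hv₂ hnc'
        rw [E1, hfv, lcp_append, key, List.append_assoc y x' y, lcp_append]
    · by_cases hxy : x <+: y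
      · -- Case C : x is a prefix of y
        obtain ⟨y', rfl⟩ := hxy
        have hx : x ≠ [] := fun h => hcomm (by simp [h])
        have hxpos : 0 < x.length := List.length_pos_iff.mpr hx
        have hlen' : x.length + y'.length ≤ n := by
          simp only [List.length_append] at hlen; omega
        have hcomm' : x ++ y' ≠ y' ++ x := by
          intro h
          apply hcomm
          rw [List.append_assoc, h, ← List.append_assoc]
        -- translate: words over {x, x ++ y'} are words over {x, y'}
        have tr' : ∀ z : List (List α), (∀ a ∈ z, a = x ∨ a = x ++ y') →
            ∃ w : List (List α), (∀ a ∈ w, a = x ∨ a = y') ∧ w.flatten = z.flatten := by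
          intro z hz
          obtain ⟨w, hw, hfw⟩ := tr_exists x y' z (fun a ha => (hz a ha).symm)
          exact ⟨w, fun a ha => (hw a ha).symm, hfw⟩
        obtain ⟨w₁, hw₁, hf₁⟩ := tr' z₁ (fun a ha => (hz₁ a ha).imp_right id)
        rcases z₀ with _ | ⟨c, rest⟩
        · exact absurd (Or.inl ⟨y' ++ z₁.flatten, by simp⟩) hnc
        · obtain ⟨v₁, hv₁, hfv⟩ :
              ∃ v₁ : List (List α), (∀ a ∈ v₁, a = x ∨ a = y') ∧
                (c :: rest).flatten = x ++ v₁.flatten := by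
            obtain ⟨w₀, hw₀, hf₀⟩ := tr' rest
              (fun a ha => hz₀ a (List.mem_cons_of_mem _ ha))
            rcases hz₀ c List.mem_cons_self with ha | ha
            · exact ⟨w₀, hw₀, by simp [hf₀, ha]⟩
            · refine ⟨y' :: w₀, ?_, by simp [hf₀, ha]⟩
              intro b hb
              simp only [List.mem_cons] at hb
              rcases hb with rfl | hb
              · exact Or.inr rfl
              · exact hw₀ b hb
          have E2 : (x ++ y') ++ z₁.flatten = x ++ (y' ++ w₁.flatten) := by
            rw [List.append_assoc, ← hf₁]
          have hnc' : ¬ ((x ++ v₁.flatten) <+: (y' ++ w₁.flatten) ∨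
              (y' ++ w₁.flatten) <+: (x ++ v₁.flatten)) := by
            intro h
            apply hnc
            rcases h with h | h
            · refine Or.inl ?_
              rw [E2, hfv]
              exact (List.prefix_append_right_inj x).mpr h
            · refine Or.inr ?_
              rw [E2, hfv]
              exact (List.prefix_append_right_inj x).mpr h
          have key := IH x y' hlen' hcomm' v₁ w₁ hv₁ hw₁ hnc'
          rw [E2, hfv, lcp_append, key, List.append_assoc x y' x, lcp_append]
      · -- Case A : x and y are not prefix-comparable
        rw [lcp_stable x y z₀.flatten z₁.flatten hxy hyx,
          lcp_stable x y y x hxy hyx]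

/-- Longest common prefix of concatenations over a binary code: if `concat z₀` and
`concat z₁` are not prefix-comparable, then their longest common prefix is
`concat (z₀ ∧ₚ z₁) · α` where `α = (x·y) ∧ₚ (y·x)`. -/
theorem bin_code_lcp_concat {α : Type*} [DecidableEq α] (x y : List α)
    (hcomm : x ++ y ≠ y ++ x)
    (z₀ z₁ : List (List α))
    (hz₀ : ∀ a ∈ z₀, a = x ∨ a = y) (hz₁ : ∀ a ∈ z₁, a = x ∨ a = y)
    (hnc : ¬ (z₀.flatten <+: z₁.flatten ∨ z₁.flatten <+: z₀.flatten)) :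
    lcp z₀.flatten z₁.flatten = (lcp z₀ z₁).flatten ++ lcp (x ++ y) (y ++ x) := by
  induction z₀ generalizing z₁ with
  | nil => exact absurd (Or.inl (by simp)) hnc
  | cons c l IHl =>
    cases z₁ with
    | nil => exact absurd (Or.inr (by simp)) hnc
    | cons d m =>
      by_cases hcd : c = d
      · subst hcd
        have hnc' : ¬ (l.flatten <+: m.flatten ∨ m.flatten <+: l.flatten) := by
          intro h
          apply hnc
          rcases h with h | h
          · exact Or.inl (by
              simp only [List.flatten_cons]
              exact (List.prefix_append_right_inj c).mpr h)
          · exact Or.inr (by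
              simp only [List.flatten_cons]
              exact (List.prefix_append_right_inj c).mpr h)
        have hrec := IHl m (fun a ha => hz₀ a (List.mem_cons_of_mem _ ha))
          (fun a ha => hz₁ a (List.mem_cons_of_mem _ ha)) hnc'
        have hl : lcp (c :: l) (c :: m) = c :: lcp l m := by
          simp [lcp]
        simp only [List.flatten_cons, hl, lcp_append, hrec, List.append_assoc]
      · have hl : lcp (c :: l) (d :: m) = [] := by
          simp [lcp, hcd]
        simp only [List.flatten_cons, hl, List.nil_append]
        simp only [List.flatten_cons] at hnc
        rcases hz₀ c List.mem_cons_self with rfl | rfl <;>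
          rcases hz₁ d List.mem_cons_self with rfl | rfl
        · exact absurd rfl hcd
        · exact lemE (c.length + d.length) c d le_rfl hcomm l m
            (fun a ha => hz₀ a (List.mem_cons_of_mem _ ha))
            (fun a ha => hz₁ a (List.mem_cons_of_mem _ ha)) hnc
        · rw [lcp_comm]
          exact lemE (d.length + c.length) d c le_rfl hcomm m l
            (fun a ha => hz₁ a (List.mem_cons_of_mem _ ha))
            (fun a ha => hz₀ a (List.mem_cons_of_mem _ ha))
            (fun h => hnc h.symm)
        · exact absurd rfl hcd
end

section
/- Let x, y be non-commuting words and let α be the longest common prefix of x·y and y·x. Then α is a prefix of concat w for every list w over {x,y} with |concat w| ≥ |α|; moreover, if concat w is strictly longer than α, the letter of concat w at position |α| is determined by the first entry of w (it equals the letter following α in x·y if the first entry is x, and the letter following α in y·x if the first entry is y). -/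
theorem lcp_prefix_left {β : Type*} [DecidableEq β] : ∀ (a b : List β), lcp a b <+: a
  | [], _ => by simp [lcp]
  | _ :: _, [] => by simp [lcp]
  | a :: l, b :: m => by
    by_cases h : a = b
    · simp [lcp, h, List.cons_prefix_cons, lcp_prefix_left l m]
    · simp [lcp, h]

theorem lcp_prefix_right {β : Type*} [DecidableEq β] : ∀ (a b : List β), lcp a b <+: b
  | [], _ => by simp [lcp]
  | _ :: _, [] => by simp [lcp]
  | a :: l, b :: m => by
    by_cases h : a = b
    · simp [lcp, h, List.cons_prefix_cons, lcp_prefix_right l m]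
    · simp [lcp, h]

theorem lcp_length_lt {β : Type*} [DecidableEq β] {a b : List β} (h : a ≠ b)
    (hl : a.length = b.length) : (lcp a b).length < a.length := by
  have hp := lcp_prefix_left a b
  have hq := lcp_prefix_right a b
  rcases lt_or_eq_of_le hp.length_le with h' | h'
  · exact h'
  · have he : lcp a b = a := hp.eq_of_length h'
    rw [he] at hq
    exact absurd (hq.eq_of_length hl) h

/-- Key lemma: if `a` is a prefix of `u ++ v` and of `v ++ u`, then `a` is a prefix
of `u ++ a`. -/
theorem pref_swap {β : Type*} {u v a : List β} (h1 : a <+: u ++ v) (h2 : a <+: v ++ u) :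
    a <+: u ++ a := by
  rcases le_or_gt a.length u.length with h | h
  · exact (List.prefix_of_prefix_length_le h1 (u.prefix_append v) h).trans (u.prefix_append a)
  · have hu : u <+: a := List.prefix_of_prefix_length_le (u.prefix_append v) h1 h.le
    obtain ⟨c, rfl⟩ := hu
    rw [List.prefix_append_right_inj]
    have hc : c <+: v := (List.prefix_append_right_inj u).mp h1
    rcases le_or_gt (u ++ c).length v.length with h' | h'
    · have hav : u ++ c <+: v := List.prefix_of_prefix_length_le h2 (v.prefix_append u) h'
      exact List.prefix_of_prefix_length_le hc hav (by simp)
    · have hv : v <+: u ++ c :=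
        List.prefix_of_prefix_length_le (v.prefix_append u) h2 h'.le
      exact hc.trans hv

/-- If `a <+: s ++ a` and `a <+: b` then `a <+: s ++ b`. -/
theorem pref_step {β : Type*} {s a b : List β} (hsa : a <+: s ++ a) (hb : a <+: b) :
    a <+: s ++ b := by
  rcases le_or_gt a.length s.length with h | h
  · exact (List.prefix_of_prefix_length_le hsa (s.prefix_append a) h).trans (s.prefix_append b)
  · have hs : s <+: a := List.prefix_of_prefix_length_le (s.prefix_append a) hsa h.le
    obtain ⟨c, rfl⟩ := hs
    rw [List.prefix_append_right_inj]
    exact ((List.prefix_append_right_inj s).mp hsa).trans hb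

/-- `a` is a prefix of `w.flatten ++ a` whenever `a <+: s ++ a` for each entry `s`. -/
theorem pref_flatten {β : Type*} {a : List β} :
    ∀ {w : List (List β)}, (∀ s ∈ w, a <+: s ++ a) → a <+: w.flatten ++ a
  | [], _ => by simp
  | s :: w, h => by
    rw [List.flatten_cons, List.append_assoc]
    exact pref_step (h s (by simp)) (pref_flatten fun t ht => h t (List.mem_cons_of_mem _ ht))

theorem take_eq_of_prefix {β : Type*} {a l : List β} (h : a <+: l) {m : ℕ}
    (hm : m ≤ a.length) : l.take m = a.take m := by
  obtain ⟨t, rfl⟩ := h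
  simp [List.take_append, Nat.sub_eq_zero_of_le hm]

/-- The next-letter lemma: the first `a.length + 1` letters of the flattening of
`u :: w` (padded by `a`) agree with those of `u ++ v ++ a`. -/
theorem take_flatten_eq {β : Type*} {a : List β} :
    ∀ (w : List (List β)) (u v : List β), a <+: u ++ a → a <+: v ++ a → u ≠ [] → v ≠ [] →
      (∀ s ∈ w, s = u ∨ s = v) →
      ((u :: w).flatten ++ a).take (a.length + 1) = (u ++ (v ++ a)).take (a.length + 1)
  | [], u, v, hu, hv, hune, _, _ => by
    have hune' : 1 ≤ u.length := List.length_pos_iff.mpr hune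
    have hm : a.length + 1 - u.length ≤ a.length := by omega
    simp only [List.flatten_cons, List.flatten_nil, List.append_nil]
    rw [List.take_append, List.take_append (l₁ := u)]
    rw [take_eq_of_prefix hv hm]
  | s :: w, u, v, hu, hv, hune, hvne, hmem => by
    have hune' : 1 ≤ u.length := List.length_pos_iff.mpr hune
    have hm : a.length + 1 - u.length ≤ a.length := by omega
    have hmem' : ∀ t ∈ s :: w, t = u ∨ t = v := hmem
    -- key : agreement for the tail word `s :: w` with `s ++ (t ++ a)` for suitable t
    obtain ⟨t, ht, key⟩ : ∃ t, (a <+: t ++ a) ∧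
        ((s :: w).flatten ++ a).take (a.length + 1) = (s ++ (t ++ a)).take (a.length + 1) := by
      have hmemtail : ∀ r ∈ w, r = u ∨ r = v := fun r hr => hmem r (List.mem_cons_of_mem _ hr)
      rcases hmem s (by simp) with rfl | rfl
      · exact ⟨v, hv, take_flatten_eq w s v hu hv hune hvne hmemtail⟩
      · exact ⟨u, hu, take_flatten_eq w s u hv hu hvne hune
          (fun r hr => (hmemtail r hr).symm)⟩
    have hs : a <+: s ++ a := by rcases hmem s (by simp) with rfl | rfl <;> assumption
    -- reduce the goal
    rw [List.flatten_cons, List.append_assoc, List.take_append,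
      List.take_append (l₁ := u) (l₂ := v ++ a)]
    congr 1
    have e1 : ((s :: w).flatten ++ a).take (a.length + 1 - u.length) =
        a.take (a.length + 1 - u.length) := by
      calc ((s :: w).flatten ++ a).take (a.length + 1 - u.length)
          = (((s :: w).flatten ++ a).take (a.length + 1)).take (a.length + 1 - u.length) := by
            rw [List.take_take, min_eq_left (by omega)]
        _ = ((s ++ (t ++ a)).take (a.length + 1)).take (a.length + 1 - u.length) := by
            rw [key]
        _ = (s ++ (t ++ a)).take (a.length + 1 - u.length) := by
            rw [List.take_take, min_eq_left (by omega)]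
        _ = a.take (a.length + 1 - u.length) := take_eq_of_prefix (pref_step hs ht) hm
    rw [e1, take_eq_of_prefix hv hm]

/-- The longest common prefix `α` of `x·y` and `y·x` is a prefix of every sufficiently
long concatenation of a list over `{x,y}`, and the next letter is determined by the
first entry of the list. -/
theorem bin_code_lcp_pref {α : Type*} [DecidableEq α] (x y : List α)
    (hcomm : x ++ y ≠ y ++ x)
    (w : List (List α)) (hw : ∀ a ∈ w, a = x ∨ a = y) :
    ((lcp (x ++ y) (y ++ x)).length ≤ w.flatten.length → lcp (x ++ y) (y ++ x) <+: w.flatten) ∧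
    ((lcp (x ++ y) (y ++ x)).length < w.flatten.length →
      (w.headI = x → w.flatten[(lcp (x ++ y) (y ++ x)).length]? =
        (x ++ y)[(lcp (x ++ y) (y ++ x)).length]?) ∧
      (w.headI = y → w.flatten[(lcp (x ++ y) (y ++ x)).length]? =
        (y ++ x)[(lcp (x ++ y) (y ++ x)).length]?)) := by
  set a := lcp (x ++ y) (y ++ x) with ha
  have ha1 : a <+: x ++ y := lcp_prefix_left _ _
  have ha2 : a <+: y ++ x := lcp_prefix_right _ _
  have hlt : a.length < (x ++ y).length := lcp_length_lt hcomm (by simp [Nat.add_comm])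
  have hxne : x ≠ [] := by rintro rfl; simp at hcomm
  have hyne : y ≠ [] := by rintro rfl; simp at hcomm
  have hx : a <+: x ++ a := pref_swap ha1 ha2
  have hy : a <+: y ++ a := pref_swap ha2 ha1
  have hall : ∀ s ∈ w, a <+: s ++ a := by
    intro s hs; rcases hw s hs with rfl | rfl <;> assumption
  have hflat : a <+: w.flatten ++ a := pref_flatten hall
  constructor
  · intro hlen
    exact List.prefix_of_prefix_length_le hflat (w.flatten.prefix_append a) hlen
  · intro hlen
    obtain ⟨s, w', rfl⟩ : ∃ s w', w = s :: w' := by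
      cases w with
      | nil => simp at hlen
      | cons s w' => exact ⟨s, w', rfl⟩
    have hmem' : ∀ t ∈ w', t = x ∨ t = y := fun t ht => hw t (List.mem_cons_of_mem _ ht)
    have getme : ∀ u v : List α, s = u → (a <+: u ++ a) → (a <+: v ++ a) → u ≠ [] → v ≠ [] →
        (∀ t ∈ w', t = u ∨ t = v) → a.length < (u ++ v).length →
        ((s :: w').flatten)[a.length]? = (u ++ v)[a.length]? := by
      intro u v hsu hu hv hune hvne hmem hltuv
      subst hsu
      have key := take_flatten_eq w' s v hu hv hune hvne hmem
      have h1 : (((s :: w').flatten ++ a).take (a.length + 1))[a.length]? =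
          ((s ++ (v ++ a)).take (a.length + 1))[a.length]? := by rw [key]
      rw [List.getElem?_take, List.getElem?_take, if_pos (Nat.lt_succ_self _),
        if_pos (Nat.lt_succ_self _)] at h1
      rw [List.getElem?_append, if_pos hlen] at h1
      rw [← List.append_assoc, List.getElem?_append, if_pos hltuv] at h1
      exact h1
    refine ⟨fun hh => ?_, fun hh => ?_⟩
    · exact getme x y hh hx hy hxne hyne hmem' hlt
    · exact getme y x hh hy hx hyne hxne (fun t ht => (hmem' t ht).symm)
        (by simpa [Nat.add_comm] using hlt)
end
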